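/- arXiv:0810.2130 — 3 statements merged into one kernel-verified Lean document; each statement's English description precedes it below -/
import Mathlib

section
/- Let g be a Lie algebra over a field k of characteristic 0 and r ∈ g ⊗ g a solution of the classical Yang–Baxter equation [r₁₂, r₁₃] + [r₁₂, r₂₃] + [r₁₃, r₂₃] = 0 such that r + r^op is g-invariant. Then the map δ: g → g ⊗ g defined by δ(x) = [r, x ⊗ 1 + 1 ⊗ x] gives g the structure of a Lie bialgebra. -/
/- STATEMENT 2: Let g be a Lie algebra over a field k of characteristic 0 and
r ∈ g ⊗ g a solution of the classical Yang–Baxter equation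
[r₁₂,r₁₃] + [r₁₂,r₂₃] + [r₁₃,r₂₃] = 0 such that r + r^op is g-invariant.
Then δ(x) = [r, x⊗1 + 1⊗x] gives g the structure of a Lie bialgebra
(δ is co-skew-symmetric, satisfies the cocycle condition and the co-Jacobi
identity, i.e. δ* is a Lie bracket on g*). -/

open TensorProduct

variable (k : Type*) [Field k] [CharZero k]
variable (L : Type*) [LieRing L] [LieAlgebra k L]

attribute [local instance 100] LieRing.ofAssociativeRing

/-- The Lie bracket of `L` as a linear map `L →ₗ End L`. -/
noncomputable def lieBr : L →ₗ[k] Module.End k L := (LieAlgebra.ad k L).toLinearMap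

/-- The Lie bracket as a linear map on the tensor square. -/
noncomputable def liftBr : L ⊗[k] L →ₗ[k] L := TensorProduct.lift (lieBr k L)

/-- `(a⊗b)⊗(c⊗d) ↦ ⁅a,c⁆⊗b⊗d`, i.e. `φ⊗ψ ↦ [φ₁₂, ψ₁₃]` for `φ,ψ ∈ g⊗g ⊆ U(g)⊗U(g)`. -/
noncomputable def t1 : (L ⊗[k] L) ⊗[k] (L ⊗[k] L) →ₗ[k] L ⊗[k] (L ⊗[k] L) :=
  (TensorProduct.map (liftBr k L) LinearMap.id) ∘ₗ
    (TensorProduct.tensorTensorTensorComm k L L L L).toLinearMap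

/-- `(a⊗b)⊗(c⊗d) ↦ a⊗⁅b,c⁆⊗d`, i.e. `φ⊗ψ ↦ [φ₁₂, ψ₂₃]`. -/
noncomputable def t2 : (L ⊗[k] L) ⊗[k] (L ⊗[k] L) →ₗ[k] L ⊗[k] (L ⊗[k] L) :=
  (LinearMap.lTensor L ((LinearMap.rTensor L (liftBr k L)) ∘ₗ
      (TensorProduct.assoc k L L L).symm.toLinearMap)) ∘ₗ
    (TensorProduct.assoc k L L (L ⊗[k] L)).toLinearMap

/-- `(a⊗b)⊗(c⊗d) ↦ a⊗c⊗⁅b,d⁆`, i.e. `φ⊗ψ ↦ [φ₁₃, ψ₂₃]`. -/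
noncomputable def t3 : (L ⊗[k] L) ⊗[k] (L ⊗[k] L) →ₗ[k] L ⊗[k] (L ⊗[k] L) :=
  (LinearMap.lTensor L (LinearMap.lTensor L (liftBr k L))) ∘ₗ
    (TensorProduct.assoc k L L (L ⊗[k] L)).toLinearMap ∘ₗ
    (TensorProduct.tensorTensorTensorComm k L L L L).toLinearMap

/-- The classical Yang–Baxter equation `[r₁₂,r₁₃]+[r₁₂,r₂₃]+[r₁₃,r₂₃] = 0`
(all terms lie in `g⊗g⊗g ⊆ U(g)^{⊗3}`). -/
def IsCYBE (r : L ⊗[k] L) : Prop :=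
  t1 k L (r ⊗ₜ r) + t2 k L (r ⊗ₜ r) + t3 k L (r ⊗ₜ r) = 0

/-- `x ↦ (ad x ⊗ 1 + 1 ⊗ ad x)`, the adjoint action on the tensor square;
`adT x t = [x⊗1 + 1⊗x, t]` in `U(g)⊗U(g)`. -/
noncomputable def adT : L →ₗ[k] (L ⊗[k] L →ₗ[k] L ⊗[k] L) :=
  ((LinearMap.rTensorHom L).comp (lieBr k L)) + ((LinearMap.lTensorHom L).comp (lieBr k L))

/-- `t ∈ g⊗g` is `g`-invariant: `[x⊗1 + 1⊗x, t] = 0` for all `x`. -/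
def LieInvariantElem (t : L ⊗[k] L) : Prop := ∀ x : L, adT k L x t = 0

/-- The flip `r^op` of `r`. -/
noncomputable def rop (r : L ⊗[k] L) : L ⊗[k] L := (TensorProduct.comm k L L) r

/-- The coboundary cobracket `δ(x) = [r, x⊗1 + 1⊗x] = -(ad x ⊗ 1 + 1 ⊗ ad x)(r)`. -/
noncomputable def cob (r : L ⊗[k] L) : L →ₗ[k] L ⊗[k] L :=
  -((LinearMap.applyₗ r) ∘ₗ (adT k L))

/-- The cyclic permutation `a⊗(b⊗c) ↦ b⊗(c⊗a)` on the triple tensor product. -/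
noncomputable def cyc : L ⊗[k] (L ⊗[k] L) →ₗ[k] L ⊗[k] (L ⊗[k] L) :=
  (TensorProduct.assoc k L L L).toLinearMap ∘ₗ (TensorProduct.comm k L (L ⊗[k] L)).toLinearMap

/-- `δ` is co-skew-symmetric, i.e. takes values in `Λ²g ⊆ g⊗g`. -/
def IsCoSkew (D : L →ₗ[k] L ⊗[k] L) : Prop :=
  ∀ x : L, (TensorProduct.comm k L L) (D x) = - D x

/-- The 1-cocycle condition
`δ([x,y]) = [δ(x), y⊗1+1⊗y] + [x⊗1+1⊗x, δ(y)]`. -/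
def IsCocycle (D : L →ₗ[k] L ⊗[k] L) : Prop :=
  ∀ x y : L, D ⁅x, y⁆ = adT k L x (D y) - adT k L y (D x)

/-- The co-Jacobi identity: the cyclic sum of `(1⊗δ)∘δ` vanishes;
equivalently `δ*` is a Lie bracket on `g*`. -/
def IsCoJacobi (D : L →ₗ[k] L ⊗[k] L) : Prop :=
  ∀ x : L,
    (LinearMap.lTensor L D) (D x) + cyc k L ((LinearMap.lTensor L D) (D x)) +
      cyc k L (cyc k L ((LinearMap.lTensor L D) (D x))) = 0

/-- `D` is a Lie bialgebra cobracket on `L`. -/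
def IsLieCobracket (D : L →ₗ[k] L ⊗[k] L) : Prop :=
  IsCoSkew k L D ∧ IsCocycle k L D ∧ IsCoJacobi k L D

set_option linter.unusedSectionVars false
set_option maxHeartbeats 1000000

section AuxDefs

@[simp] lemma liftBr_tmul (u v : L) : liftBr k L (u ⊗ₜ[k] v) = ⁅u, v⁆ := by
  simp [liftBr, lieBr]

@[simp] lemma adT_tmul (x u v : L) :
    adT k L x (u ⊗ₜ[k] v) = ⁅x, u⁆ ⊗ₜ[k] v + u ⊗ₜ[k] ⁅x, v⁆ := by
  simp [adT, lieBr]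

@[simp] lemma t1_tmul (a b c d : L) :
    t1 k L ((a ⊗ₜ[k] b) ⊗ₜ[k] (c ⊗ₜ[k] d)) = ⁅a, c⁆ ⊗ₜ[k] (b ⊗ₜ[k] d) := by
  simp [t1]

@[simp] lemma t2_tmul (a b c d : L) :
    t2 k L ((a ⊗ₜ[k] b) ⊗ₜ[k] (c ⊗ₜ[k] d)) = a ⊗ₜ[k] (⁅b, c⁆ ⊗ₜ[k] d) := by
  simp [t2]

@[simp] lemma t3_tmul (a b c d : L) :
    t3 k L ((a ⊗ₜ[k] b) ⊗ₜ[k] (c ⊗ₜ[k] d)) = a ⊗ₜ[k] (c ⊗ₜ[k] ⁅b, d⁆) := by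
  simp [t3]

@[simp] lemma cyc_tmul (a b c : L) :
    cyc k L (a ⊗ₜ[k] (b ⊗ₜ[k] c)) = b ⊗ₜ[k] (c ⊗ₜ[k] a) := by
  simp [cyc]

@[simp] lemma cob_apply (r : L ⊗[k] L) (x : L) :
    cob k L r x = - adT k L x r := by
  simp [cob]

/-- flip on `L ⊗ L` as a linear map. -/
noncomputable def fl : L ⊗[k] L →ₗ[k] L ⊗[k] L := (TensorProduct.comm k L L).toLinearMap

@[simp] lemma fl_tmul (u v : L) : fl k L (u ⊗ₜ[k] v) = v ⊗ₜ[k] u := rfl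

@[simp] lemma fl_fl (t : L ⊗[k] L) : fl k L (fl k L t) = t := by
  have h : (fl k L) ∘ₗ (fl k L) = LinearMap.id := by
    apply TensorProduct.ext'; intro u v; rfl
  exact congrArg (fun f => f t) h

/-- swap of the two tensor-square factors. -/
noncomputable def psw : (L ⊗[k] L) ⊗[k] (L ⊗[k] L) →ₗ[k] (L ⊗[k] L) ⊗[k] (L ⊗[k] L) :=
  (TensorProduct.comm k (L ⊗[k] L) (L ⊗[k] L)).toLinearMap

@[simp] lemma psw_tmul (p q : L ⊗[k] L) : psw k L (p ⊗ₜ[k] q) = q ⊗ₜ[k] p := rfl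

/-- transposition of the last two slots of `L ⊗ (L ⊗ L)`. -/
noncomputable def t23 : L ⊗[k] (L ⊗[k] L) →ₗ[k] L ⊗[k] (L ⊗[k] L) :=
  LinearMap.lTensor L (fl k L)

@[simp] lemma t23_tmul (a b c : L) :
    t23 k L (a ⊗ₜ[k] (b ⊗ₜ[k] c)) = a ⊗ₜ[k] (c ⊗ₜ[k] b) := rfl

lemma t23_t23 (w : L ⊗[k] (L ⊗[k] L)) : t23 k L (t23 k L w) = w := by
  have h : (t23 k L) ∘ₗ (t23 k L) = LinearMap.id := by ext a b c; rfl
  exact congrArg (fun f => f w) h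

/-- adjoint action on the triple tensor product. -/
noncomputable def adT3 (x : L) : L ⊗[k] (L ⊗[k] L) →ₗ[k] L ⊗[k] (L ⊗[k] L) :=
  LinearMap.rTensor (L ⊗[k] L) (lieBr k L x) + LinearMap.lTensor L (adT k L x)

@[simp] lemma adT3_tmul (x a b c : L) :
    adT3 k L x (a ⊗ₜ[k] (b ⊗ₜ[k] c)) =
      ⁅x, a⁆ ⊗ₜ[k] (b ⊗ₜ[k] c) + a ⊗ₜ[k] (⁅x, b⁆ ⊗ₜ[k] c + b ⊗ₜ[k] ⁅x, c⁆) := by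
  simp [adT3, lieBr]

-- permutation group identities
lemma perm_v (w : L ⊗[k] (L ⊗[k] L)) :
    t23 k L (cyc k L (t23 k L w)) = cyc k L (cyc k L w) := by
  have h : (t23 k L) ∘ₗ (cyc k L) ∘ₗ (t23 k L) = (cyc k L) ∘ₗ (cyc k L) := by
    ext a b c; rfl
  exact congrArg (fun f => f w) h

lemma perm_vi (w : L ⊗[k] (L ⊗[k] L)) :
    cyc k L (t23 k L (cyc k L w)) = t23 k L w := by
  have h : (cyc k L) ∘ₗ (t23 k L) ∘ₗ (cyc k L) = t23 k L := by
    ext a b c; rfl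
  exact congrArg (fun f => f w) h

lemma perm_vii (w : L ⊗[k] (L ⊗[k] L)) :
    cyc k L (cyc k L (cyc k L w)) = w := by
  have h : (cyc k L) ∘ₗ (cyc k L) ∘ₗ (cyc k L) = LinearMap.id := by
    ext a b c; rfl
  exact congrArg (fun f => f w) h

-- decorations
noncomputable def Rf : (L ⊗[k] L) ⊗[k] (L ⊗[k] L) →ₗ[k] (L ⊗[k] L) ⊗[k] (L ⊗[k] L) :=
  LinearMap.rTensor (L ⊗[k] L) (fl k L)
noncomputable def Lf : (L ⊗[k] L) ⊗[k] (L ⊗[k] L) →ₗ[k] (L ⊗[k] L) ⊗[k] (L ⊗[k] L) :=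
  LinearMap.lTensor (L ⊗[k] L) (fl k L)

@[simp] lemma Rf_tmul (p q : L ⊗[k] L) : Rf k L (p ⊗ₜ[k] q) = (fl k L p) ⊗ₜ[k] q := rfl
@[simp] lemma Lf_tmul (p q : L ⊗[k] L) : Lf k L (p ⊗ₜ[k] q) = p ⊗ₜ[k] (fl k L q) := rfl

-- structural identities
lemma str_i (w : (L ⊗[k] L) ⊗[k] (L ⊗[k] L)) :
    t2 k L w = t23 k L (cyc k L (t1 k L (Rf k L w))) := by
  have h : t2 k L = (t23 k L) ∘ₗ (cyc k L) ∘ₗ (t1 k L) ∘ₗ (Rf k L) := by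
    apply TensorProduct.ext_fourfold'; intro a b c d; simp
  exact congrArg (fun f => f w) h

lemma str_ii (w : (L ⊗[k] L) ⊗[k] (L ⊗[k] L)) :
    t3 k L w = cyc k L (t1 k L (Rf k L (Lf k L w))) := by
  have h : t3 k L = (cyc k L) ∘ₗ (t1 k L) ∘ₗ (Rf k L) ∘ₗ (Lf k L) := by
    apply TensorProduct.ext_fourfold'; intro a b c d; simp
  exact congrArg (fun f => f w) h

lemma str_iii (w : (L ⊗[k] L) ⊗[k] (L ⊗[k] L)) :
    t23 k L (t1 k L w) = - t1 k L (psw k L w) := by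
  have h : (t23 k L) ∘ₗ (t1 k L) = -((t1 k L) ∘ₗ (psw k L)) := by
    apply TensorProduct.ext_fourfold'; intro a b c d
    simp only [LinearMap.coe_comp, Function.comp_apply, LinearMap.neg_apply, psw_tmul, t1_tmul,
      t23_tmul]
    rw [← lie_skew c a]
    simp only [TensorProduct.neg_tmul, neg_neg]
  exact congrArg (fun f => f w) h

lemma flip_adT (x : L) (t : L ⊗[k] L) :
    fl k L (adT k L x t) = adT k L x (fl k L t) := by
  have h : (fl k L) ∘ₗ (adT k L x) = (adT k L x) ∘ₗ (fl k L) := by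
    apply TensorProduct.ext'; intro u v; simp; abel
  exact congrArg (fun f => f t) h

lemma adT_lie (x y : L) (t : L ⊗[k] L) :
    adT k L ⁅x, y⁆ t = adT k L x (adT k L y t) - adT k L y (adT k L x t) := by
  have h : adT k L ⁅x, y⁆ = (adT k L x) ∘ₗ (adT k L y) - (adT k L y) ∘ₗ (adT k L x) := by
    apply TensorProduct.ext'; intro u v
    simp only [LinearMap.sub_apply, LinearMap.coe_comp, Function.comp_apply, adT_tmul, map_add,
      lie_lie, TensorProduct.tmul_sub, TensorProduct.sub_tmul]
    abel
  exact congrArg (fun f => f t) h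

lemma cyc_adT3 (x : L) (w : L ⊗[k] (L ⊗[k] L)) :
    cyc k L (adT3 k L x w) = adT3 k L x (cyc k L w) := by
  have h : (cyc k L) ∘ₗ (adT3 k L x) = (adT3 k L x) ∘ₗ (cyc k L) := by
    ext a b c; simp [TensorProduct.tmul_add]; abel
  exact congrArg (fun f => f w) h

lemma equiv_T (x : L) (p q : L ⊗[k] L) :
    adT3 k L x (t1 k L (p ⊗ₜ[k] q) + t2 k L (p ⊗ₜ[k] q) + t3 k L (p ⊗ₜ[k] q)) =
      (t1 k L ((adT k L x p) ⊗ₜ[k] q) + t2 k L ((adT k L x p) ⊗ₜ[k] q) +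
        t3 k L ((adT k L x p) ⊗ₜ[k] q)) +
      (t1 k L (p ⊗ₜ[k] (adT k L x q)) + t2 k L (p ⊗ₜ[k] (adT k L x q)) +
        t3 k L (p ⊗ₜ[k] (adT k L x q))) := by
  have h : (adT3 k L x) ∘ₗ (t1 k L + t2 k L + t3 k L) =
      (t1 k L + t2 k L + t3 k L) ∘ₗ
        (LinearMap.rTensor (L ⊗[k] L) (adT k L x) + LinearMap.lTensor (L ⊗[k] L) (adT k L x)) := by
    apply TensorProduct.ext_fourfold'; intro a b c d
    simp [lie_lie, TensorProduct.tmul_sub, TensorProduct.sub_tmul, TensorProduct.tmul_add,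
      TensorProduct.add_tmul]
    abel
  have h2 := congrArg (fun f => f (p ⊗ₜ[k] q)) h
  simp only [LinearMap.coe_comp, Function.comp_apply, LinearMap.add_apply, map_add,
    LinearMap.rTensor_tmul, LinearMap.lTensor_tmul] at h2
  rw [map_add, map_add]
  rw [h2]

lemma cob_add (r r' : L ⊗[k] L) : cob k L (r + r') = cob k L r + cob k L r' := by
  ext x; simp; abel

lemma cob_zero : cob k L (0 : L ⊗[k] L) = 0 := by
  ext x; simp

lemma MI1 (x : L) (p q : L ⊗[k] L) :
    (LinearMap.lTensor L (cob k L q)) (cob k L p x)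
      = adT3 k L x (t2 k L (p ⊗ₜ[k] q) + t3 k L (p ⊗ₜ[k] q))
        - (t2 k L (p ⊗ₜ[k] (adT k L x q)) + t3 k L (p ⊗ₜ[k] (adT k L x q))) := by
  induction p using TensorProduct.induction_on with
  | zero => simp
  | add p₁ p₂ h₁ h₂ =>
    have e1 : cob k L (p₁ + p₂) x = cob k L p₁ x + cob k L p₂ x := by simp; abel
    rw [e1, map_add, h₁, h₂]
    simp only [TensorProduct.add_tmul, map_add]
    abel
  | tmul a b =>
    induction q using TensorProduct.induction_on with
    | zero => simp [cob_zero]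
    | add q₁ q₂ g₁ g₂ =>
      rw [cob_add, LinearMap.lTensor_add, LinearMap.add_apply, g₁, g₂]
      have e2 : adT k L x (q₁ + q₂) = adT k L x q₁ + adT k L x q₂ := by simp
      rw [e2]
      simp only [TensorProduct.tmul_add, map_add]
      abel
    | tmul c d =>
      simp [lie_lie, TensorProduct.tmul_sub, TensorProduct.sub_tmul, TensorProduct.tmul_add,
        TensorProduct.add_tmul, TensorProduct.tmul_neg, TensorProduct.neg_tmul]
      abel

lemma lemA1 (t : L ⊗[k] L) (hinv' : ∀ y : L, adT k L y t = 0) (p : L ⊗[k] L) :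
    t2 k L (p ⊗ₜ[k] t) + t3 k L (p ⊗ₜ[k] t) = 0 := by
  induction p using TensorProduct.induction_on with
  | zero => simp
  | add p₁ p₂ h₁ h₂ =>
    rw [TensorProduct.add_tmul, map_add, map_add, add_add_add_comm, h₁, h₂, add_zero]
  | tmul a b =>
    have key : (t2 k L + t3 k L) ∘ₗ (TensorProduct.mk k (L ⊗[k] L) (L ⊗[k] L) (a ⊗ₜ[k] b))
        = (TensorProduct.mk k L (L ⊗[k] L) a) ∘ₗ (adT k L b) := by
      apply TensorProduct.ext'; intro u v
      simp [TensorProduct.tmul_add]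
    have h := congrArg (fun f => f t) key
    simp only [LinearMap.coe_comp, Function.comp_apply, LinearMap.add_apply,
      TensorProduct.mk_apply, hinv' b, map_zero] at h
    exact h

lemma lemA2 (t : L ⊗[k] L) (hinv' : ∀ y : L, adT k L y t = 0) (p : L ⊗[k] L) :
    t1 k L (t ⊗ₜ[k] p) + t2 k L (t ⊗ₜ[k] p) = 0 := by
  induction p using TensorProduct.induction_on with
  | zero => simp
  | add p₁ p₂ h₁ h₂ =>
    rw [TensorProduct.tmul_add, map_add, map_add, add_add_add_comm, h₁, h₂, add_zero]
  | tmul a b =>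
    have key : (t1 k L + t2 k L) ∘ₗ ((TensorProduct.mk k (L ⊗[k] L) (L ⊗[k] L)).flip (a ⊗ₜ[k] b))
        = -((LinearMap.lTensor L ((TensorProduct.mk k L L).flip b)) ∘ₗ (adT k L a)) := by
      apply TensorProduct.ext'; intro u v
      simp only [LinearMap.coe_comp, Function.comp_apply, LinearMap.flip_apply,
        TensorProduct.mk_apply, LinearMap.add_apply, LinearMap.neg_apply, adT_tmul, map_add,
        LinearMap.lTensor_tmul, t1_tmul, t2_tmul]
      rw [← lie_skew a u, ← lie_skew a v]
      simp only [TensorProduct.neg_tmul, TensorProduct.tmul_neg]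
      abel
    have h := congrArg (fun f => f t) key
    simp only [LinearMap.coe_comp, Function.comp_apply, LinearMap.flip_apply,
      TensorProduct.mk_apply, LinearMap.neg_apply, hinv' a, map_zero, neg_zero] at h
    exact h

lemma lemA3 (t : L ⊗[k] L) (hinv' : ∀ y : L, adT k L y t = 0) (hfl : fl k L t = t)
    (p : L ⊗[k] L) :
    t1 k L (p ⊗ₜ[k] t) = cyc k L (t1 k L (t ⊗ₜ[k] p)) := by
  induction p using TensorProduct.induction_on with
  | zero => simp
  | add p₁ p₂ h₁ h₂ =>
    rw [TensorProduct.add_tmul, TensorProduct.tmul_add, map_add, map_add, map_add, h₁, h₂]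
  | tmul a b =>
    have key : (t1 k L) ∘ₗ (TensorProduct.mk k (L ⊗[k] L) (L ⊗[k] L) (a ⊗ₜ[k] b))
          - (cyc k L) ∘ₗ (t1 k L) ∘ₗ
              ((TensorProduct.mk k (L ⊗[k] L) (L ⊗[k] L)).flip (a ⊗ₜ[k] b)) ∘ₗ (fl k L)
        = (LinearMap.lTensor L (TensorProduct.mk k L L b)) ∘ₗ (adT k L a) := by
      apply TensorProduct.ext'; intro u v
      simp only [LinearMap.coe_comp, Function.comp_apply, LinearMap.sub_apply,
        LinearMap.flip_apply, TensorProduct.mk_apply, adT_tmul, map_add,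
        LinearMap.lTensor_tmul, t1_tmul, fl_tmul, cyc_tmul]
      rw [← lie_skew a v]
      simp only [TensorProduct.neg_tmul, TensorProduct.tmul_neg]
      abel
    have h := congrArg (fun f => f t) key
    simp only [LinearMap.coe_comp, Function.comp_apply, LinearMap.sub_apply,
      LinearMap.flip_apply, TensorProduct.mk_apply, hinv' a, map_zero, hfl] at h
    exact sub_eq_zero.mp h

lemma K1gen (X : L ⊗[k] (L ⊗[k] L)) (hX : t23 k L X = -X) :
    (- t23 k L (cyc k L X) + cyc k L X)
      + cyc k L (- t23 k L (cyc k L X) + cyc k L X)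
      + cyc k L (cyc k L (- t23 k L (cyc k L X) + cyc k L X))
    = (2:ℤ) • (X + - t23 k L (cyc k L X) + cyc k L X) := by
  have c1 : cyc k L (t23 k L (cyc k L X)) = -X := by rw [perm_vi, hX]
  have c2 : cyc k L (cyc k L X) = - t23 k L (cyc k L X) := by
    have h := perm_v k L X
    rw [hX, map_neg, map_neg] at h
    exact h.symm
  have c3 : cyc k L (cyc k L (cyc k L X)) = X := perm_vii k L X
  simp only [map_add, map_neg]
  rw [c1]
  simp only [map_neg]
  rw [c3, c2]
  abel

lemma K2gen (B : L ⊗[k] (L ⊗[k] L)) :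
    (- t23 k L (cyc k L B) + cyc k L B)
      + cyc k L (- t23 k L (cyc k L B) + cyc k L B)
      + cyc k L (cyc k L (- t23 k L (cyc k L B) + cyc k L B))
    = ((- t23 k L B) + cyc k L (cyc k L B) + (- t23 k L (cyc k L (cyc k L B))))
      + (B + (- t23 k L (cyc k L B)) + cyc k L B) := by
  have b1 : cyc k L (t23 k L (cyc k L B)) = t23 k L B := perm_vi k L B
  have b2 : cyc k L (cyc k L (cyc k L B)) = B := perm_vii k L B
  have b3 : cyc k L (t23 k L B) = t23 k L (cyc k L (cyc k L B)) := by
    have h := congrArg (t23 k L) (perm_v k L B)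
    rw [t23_t23] at h
    exact h
  simp only [map_add, map_neg]
  rw [b1, b3, b2]
  abel

end AuxDefs
theorem stmt2 (r : L ⊗[k] L) (hCYBE : IsCYBE k L r)
    (hinv : LieInvariantElem k L (r + rop k L r)) :
    IsLieCobracket k L (cob k L r) := by
  have h2 : (2:k) ≠ 0 := two_ne_zero
  have hflr : fl k L r = rop k L r := rfl
  have hinv' : ∀ y : L, adT k L y (r + rop k L r) = 0 := hinv
  have h1 : fl k L (rop k L r) = r := by rw [← hflr, fl_fl]
  have hfls : fl k L (r + rop k L r) = r + rop k L r := by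
    rw [map_add, hflr, h1, add_comm]
  obtain ⟨t, ht⟩ : ∃ t : L ⊗[k] L, t = (2:k)⁻¹ • (r + rop k L r) := ⟨_, rfl⟩
  obtain ⟨ρ, hρd⟩ : ∃ ρ : L ⊗[k] L, ρ = r - t := ⟨_, rfl⟩
  have hst : t + t = r + rop k L r := by
    rw [ht, ← two_smul k, smul_smul, mul_inv_cancel₀ h2, one_smul]
  have htfl : fl k L t = t := by rw [ht, map_smul, hfls]
  have htinv : ∀ y : L, adT k L y t = 0 := fun y => by
    rw [ht, map_smul, hinv' y, smul_zero]
  have h3 : rop k L r = (t + t) - r := by rw [hst]; abel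
  have hρfl : fl k L ρ = -ρ := by
    rw [hρd, map_sub, hflr, htfl, h3]; abel
  have hr : r = ρ + t := by rw [hρd]; abel
  clear ht hρd hst h3 hfls h1
  refine ⟨?_, ?_, ?_⟩
  · -- CoSkew
    intro x
    show (fl k L) (cob k L r x) = - (cob k L r x)
    rw [cob_apply, map_neg, flip_adT, hflr,
      show rop k L r = (r + rop k L r) - r from by abel,
      map_sub, hinv' x, zero_sub, neg_neg]
  · -- Cocycle
    intro x y
    simp only [cob_apply]
    rw [adT_lie]
    simp only [map_neg]
    abel
  · -- CoJacobi
    intro x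
    have hcobt : cob k L t = 0 := by ext z; simp [htinv z]
    have hDm : cob k L r = cob k L ρ := by rw [hr, cob_add, hcobt, add_zero]
    rw [hDm]
    -- generic antisymmetric reductions
    have gen1 : ∀ p₁ p₂ : L ⊗[k] L,
        t1 k L (p₂ ⊗ₜ[k] p₁) = - t23 k L (t1 k L (p₁ ⊗ₜ[k] p₂)) := by
      intro p₁ p₂
      rw [str_iii, psw_tmul, neg_neg]
    have gen2 : ∀ p₁ p₂ : L ⊗[k] L, fl k L p₁ = -p₁ →
        t2 k L (p₁ ⊗ₜ[k] p₂) = - t23 k L (cyc k L (t1 k L (p₁ ⊗ₜ[k] p₂))) := by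
      intro p₁ p₂ h
      rw [str_i, Rf_tmul, h, TensorProduct.neg_tmul, map_neg, map_neg, map_neg]
    have gen3 : ∀ p₁ p₂ : L ⊗[k] L, fl k L p₁ = -p₁ → fl k L p₂ = -p₂ →
        t3 k L (p₁ ⊗ₜ[k] p₂) = cyc k L (t1 k L (p₁ ⊗ₜ[k] p₂)) := by
      intro p₁ p₂ hfl₁ hfl₂
      rw [str_ii, Lf_tmul, hfl₂, TensorProduct.tmul_neg, map_neg, Rf_tmul, hfl₁,
        TensorProduct.neg_tmul, neg_neg]
    have hq'fl : fl k L (adT k L x ρ) = -(adT k L x ρ) := by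
      rw [flip_adT, hρfl, map_neg]
    have hNA : t23 k L (t1 k L (ρ ⊗ₜ[k] ρ)) = -(t1 k L (ρ ⊗ₜ[k] ρ)) :=
      neg_eq_iff_eq_neg.mp (gen1 ρ ρ).symm
    have hBp : t1 k L ((adT k L x ρ) ⊗ₜ[k] ρ) = - t23 k L (t1 k L (ρ ⊗ₜ[k] (adT k L x ρ))) :=
      gen1 ρ (adT k L x ρ)
    have e2w : t2 k L (ρ ⊗ₜ[k] ρ) = - t23 k L (cyc k L (t1 k L (ρ ⊗ₜ[k] ρ))) := gen2 ρ ρ hρfl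
    have e3w : t3 k L (ρ ⊗ₜ[k] ρ) = cyc k L (t1 k L (ρ ⊗ₜ[k] ρ)) := gen3 ρ ρ hρfl hρfl
    have e2v : t2 k L (ρ ⊗ₜ[k] (adT k L x ρ))
        = - t23 k L (cyc k L (t1 k L (ρ ⊗ₜ[k] (adT k L x ρ)))) := gen2 ρ _ hρfl
    have e3v : t3 k L (ρ ⊗ₜ[k] (adT k L x ρ))
        = cyc k L (t1 k L (ρ ⊗ₜ[k] (adT k L x ρ))) := gen3 ρ _ hρfl hq'fl
    have e2v' : t2 k L ((adT k L x ρ) ⊗ₜ[k] ρ)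
        = cyc k L (cyc k L (t1 k L (ρ ⊗ₜ[k] (adT k L x ρ)))) := by
      rw [gen2 _ ρ hq'fl, hBp, map_neg, map_neg, neg_neg]
      exact perm_v k L _
    have e3v' : t3 k L ((adT k L x ρ) ⊗ₜ[k] ρ)
        = - t23 k L (cyc k L (cyc k L (t1 k L (ρ ⊗ₜ[k] (adT k L x ρ))))) := by
      rw [gen3 _ ρ hq'fl hρfl, hBp, map_neg]
      have h := congrArg (t23 k L) (perm_v k L (t1 k L (ρ ⊗ₜ[k] (adT k L x ρ))))
      rw [t23_t23] at h
      rw [h]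
    -- sum over cyclic images of W
    have hsumW : adT3 k L x (t2 k L (ρ ⊗ₜ[k] ρ) + t3 k L (ρ ⊗ₜ[k] ρ))
        + cyc k L (adT3 k L x (t2 k L (ρ ⊗ₜ[k] ρ) + t3 k L (ρ ⊗ₜ[k] ρ)))
        + cyc k L (cyc k L (adT3 k L x (t2 k L (ρ ⊗ₜ[k] ρ) + t3 k L (ρ ⊗ₜ[k] ρ))))
        = adT3 k L x ((2:ℤ) •
            (t1 k L (ρ ⊗ₜ[k] ρ) + t2 k L (ρ ⊗ₜ[k] ρ) + t3 k L (ρ ⊗ₜ[k] ρ))) := by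
      simp only [cyc_adT3]
      rw [← map_add, ← map_add]
      congr 1
      rw [e2w, e3w]
      exact K1gen k L (t1 k L (ρ ⊗ₜ[k] ρ)) hNA
    -- sum over cyclic images of V
    have hsumV : (t2 k L (ρ ⊗ₜ[k] (adT k L x ρ)) + t3 k L (ρ ⊗ₜ[k] (adT k L x ρ)))
        + cyc k L (t2 k L (ρ ⊗ₜ[k] (adT k L x ρ)) + t3 k L (ρ ⊗ₜ[k] (adT k L x ρ)))
        + cyc k L (cyc k L (t2 k L (ρ ⊗ₜ[k] (adT k L x ρ)) + t3 k L (ρ ⊗ₜ[k] (adT k L x ρ))))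
        = adT3 k L x
            (t1 k L (ρ ⊗ₜ[k] ρ) + t2 k L (ρ ⊗ₜ[k] ρ) + t3 k L (ρ ⊗ₜ[k] ρ)) := by
      have heq := equiv_T k L x ρ ρ
      rw [hBp, e2v', e3v', e2v, e3v] at heq
      rw [e2v, e3v]
      rw [K2gen k L (t1 k L (ρ ⊗ₜ[k] (adT k L x ρ)))]
      exact heq.symm
    -- K3 : adT3 x (T (ρ⊗ρ)) = 0
    have hZ : adT3 k L x
        (t1 k L (ρ ⊗ₜ[k] ρ) + t2 k L (ρ ⊗ₜ[k] ρ) + t3 k L (ρ ⊗ₜ[k] ρ)) = 0 := by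
      have h0 : t1 k L (r ⊗ₜ[k] r) + t2 k L (r ⊗ₜ[k] r) + t3 k L (r ⊗ₜ[k] r) = 0 := hCYBE
      rw [hr, TensorProduct.add_tmul, TensorProduct.tmul_add, TensorProduct.tmul_add] at h0
      simp only [map_add] at h0
      have hA4 : t3 k L (t ⊗ₜ[k] ρ) = - cyc k L (t1 k L (t ⊗ₜ[k] ρ)) := by
        rw [str_ii, Lf_tmul, hρfl, TensorProduct.tmul_neg, map_neg, Rf_tmul, htfl,
          map_neg, map_neg]
      have hcross : (t1 k L (ρ ⊗ₜ[k] t) + t2 k L (ρ ⊗ₜ[k] t) + t3 k L (ρ ⊗ₜ[k] t))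
          + (t1 k L (t ⊗ₜ[k] ρ) + t2 k L (t ⊗ₜ[k] ρ) + t3 k L (t ⊗ₜ[k] ρ)) = 0 := by
        rw [lemA3 k L t htinv htfl ρ, hA4]
        have hs1 := lemA1 k L t htinv ρ
        have hs2 := lemA2 k L t htinv ρ
        calc cyc k L (t1 k L (t ⊗ₜ[k] ρ)) + t2 k L (ρ ⊗ₜ[k] t) + t3 k L (ρ ⊗ₜ[k] t)
              + (t1 k L (t ⊗ₜ[k] ρ) + t2 k L (t ⊗ₜ[k] ρ)
                + - cyc k L (t1 k L (t ⊗ₜ[k] ρ)))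
            = (t2 k L (ρ ⊗ₜ[k] t) + t3 k L (ρ ⊗ₜ[k] t))
              + (t1 k L (t ⊗ₜ[k] ρ) + t2 k L (t ⊗ₜ[k] ρ)) := by abel
          _ = 0 := by rw [hs1, hs2, add_zero]
      have h4 : (t1 k L (ρ ⊗ₜ[k] ρ) + t2 k L (ρ ⊗ₜ[k] ρ) + t3 k L (ρ ⊗ₜ[k] ρ))
          + ((t1 k L (ρ ⊗ₜ[k] t) + t2 k L (ρ ⊗ₜ[k] t) + t3 k L (ρ ⊗ₜ[k] t))
            + (t1 k L (t ⊗ₜ[k] ρ) + t2 k L (t ⊗ₜ[k] ρ) + t3 k L (t ⊗ₜ[k] ρ)))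
          + (t1 k L (t ⊗ₜ[k] t) + t2 k L (t ⊗ₜ[k] t) + t3 k L (t ⊗ₜ[k] t)) = 0 := by
        rw [← h0]; abel
      rw [hcross, add_zero] at h4
      have hTT := eq_neg_of_add_eq_zero_left h4
      rw [hTT, map_neg]
      have heqt := equiv_T k L x t t
      rw [htinv x] at heqt
      simp only [TensorProduct.zero_tmul, TensorProduct.tmul_zero, map_zero, add_zero,
        zero_add] at heqt
      rw [heqt, neg_zero]
    -- final assembly
    have final : ∀ W V Z : L ⊗[k] (L ⊗[k] L),
        (W + cyc k L W + cyc k L (cyc k L W) = adT3 k L x ((2:ℤ) • Z)) →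
        (V + cyc k L V + cyc k L (cyc k L V) = adT3 k L x Z) →
        (adT3 k L x Z = 0) →
        (W - V) + cyc k L (W - V) + cyc k L (cyc k L (W - V)) = 0 := by
      intro W V Z hW hV hZ'
      rw [map_zsmul, hZ', smul_zero] at hW
      rw [hZ'] at hV
      calc (W - V) + cyc k L (W - V) + cyc k L (cyc k L (W - V))
          = (W + cyc k L W + cyc k L (cyc k L W))
            - (V + cyc k L V + cyc k L (cyc k L V)) := by
            simp only [map_sub]; abel
        _ = 0 := by rw [hW, hV, sub_zero]
    rw [MI1 k L x ρ ρ]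
    exact final _ _ _ hsumW hsumV hZ
end

section
/- Let (g, [·,·], δ) be a Lie bialgebra over a field k of characteristic 0. Extending δ from g to the universal enveloping algebra U(g) by the co-Leibniz rule δ(ab) = δ(a)Δ(b) + Δ(a)δ(b) gives U(g) the structure of a co-Poisson Hopf algebra; in particular the extended δ is well-defined, co-skew-symmetric, satisfies the co-Jacobi identity, and is compatible with the standard comultiplication of U(g). -/
/- STATEMENT 4: Let (g, [·,·], δ) be a Lie bialgebra over a field k of
characteristic 0.  Extending δ from g to U(g) by the co-Leibniz rule
δ(ab) = δ(a)Δ(b) + Δ(a)δ(b) gives U(g) the structure of a co-Poisson Hopf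
algebra: the extension D is well-defined, co-skew-symmetric, satisfies the
co-Jacobi identity and is compatible with the standard comultiplication Δ of
U(g) (the algebra map determined by Δ(x) = x⊗1 + 1⊗x for x ∈ g). -/

open TensorProduct

attribute [local instance] LieRing.ofAssociativeRing

variable (k : Type*) [Field k] [CharZero k]
variable (L : Type*) [LieRing L] [LieAlgebra k L]

section Stmt4Aux
open UniversalEnvelopingAlgebra
set_option synthInstance.maxHeartbeats 1000000
set_option maxHeartbeats 1000000
set_option linter.unusedSectionVars false


noncomputable def iL : L →ₗ[k] UniversalEnvelopingAlgebra k L :=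
  (UniversalEnvelopingAlgebra.ι k : L →ₗ⁅k⁆ UniversalEnvelopingAlgebra k L).toLinearMap

variable {k L}

theorem adjoin_top : Algebra.adjoin k (Set.range (iL k L)) = ⊤ := by
  have hs : ∀ x : L, iL k L x ∈ Algebra.adjoin k (Set.range (iL k L)) :=
    fun x => Algebra.subset_adjoin ⟨x, rfl⟩
  let f : L →ₗ⁅k⁆ Algebra.adjoin k (Set.range (iL k L)) :=
    { toFun := fun x => ⟨iL k L x, hs x⟩
      map_add' := fun x y => by ext; simp [iL]; rfl
      map_smul' := fun c x => by ext; simp [iL]; rfl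
      map_lie' := fun {x y} => by
        ext
        simp [iL, LieRing.of_associative_ring_bracket, Subalgebra.coe_mul]; rfl }
  have key : (Algebra.adjoin k (Set.range (iL k L))).val.comp (lift k f) = AlgHom.id k _ := by
    ext x
    show ((Algebra.adjoin k (Set.range (iL k L))).val.comp (lift k f)) (ι k x) = ι k x
    rw [AlgHom.comp_apply, lift_ι_apply]
    rfl
  rw [eq_top_iff]
  intro u _
  have : u = ((Algebra.adjoin k (Set.range (iL k L))).val.comp (lift k f)) u := by
    rw [key]; rfl
  rw [this]
  exact ((lift k f) u).2

theorem derivation_ext {B : Type*} [Ring B] [Algebra k B]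
    (Φ : UniversalEnvelopingAlgebra k L →ₐ[k] B)
    (f g : UniversalEnvelopingAlgebra k L →ₗ[k] B)
    (hf : ∀ a b, f (a * b) = f a * Φ b + Φ a * f b)
    (hg : ∀ a b, g (a * b) = g a * Φ b + Φ a * g b)
    (h : ∀ x : L, f (iL k L x) = g (iL k L x)) : f = g := by
  have one_eq : ∀ (f' : UniversalEnvelopingAlgebra k L →ₗ[k] B),
      (∀ a b, f' (a * b) = f' a * Φ b + Φ a * f' b) → f' 1 = 0 := by
    intro f' hf'
    have := hf' 1 1; simp at this; exact this
  ext u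
  have hu : u ∈ Algebra.adjoin k (Set.range (iL k L)) := by rw [adjoin_top]; exact Algebra.mem_top
  induction hu using Algebra.adjoin_induction with
  | mem x hx => obtain ⟨y, rfl⟩ := hx; exact h y
  | algebraMap r =>
      have : (algebraMap k (UniversalEnvelopingAlgebra k L)) r = r • 1 :=
        (Algebra.algebraMap_eq_smul_one r)
      rw [this, map_smul, map_smul, one_eq f hf, one_eq g hg]
  | add x y hx hy ihx ihy => rw [map_add, map_add, ihx, ihy]
  | mul x y hx hy ihx ihy => rw [hf, hg, ihx, ihy]

theorem ahext {B : Type*} [Semiring B] [Algebra k B] {f g : UniversalEnvelopingAlgebra k L →ₐ[k] B}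
    (h : ∀ x : L, f (iL k L x) = g (iL k L x)) : ∀ u, f u = g u := by
  intro u
  have hu : u ∈ Algebra.adjoin k (Set.range (iL k L)) := by
    rw [adjoin_top]; exact Algebra.mem_top
  induction hu using Algebra.adjoin_induction with
  | mem x hx => obtain ⟨y, rfl⟩ := hx; exact h y
  | algebraMap r => rw [AlgHom.commutes, AlgHom.commutes]
  | add x y hx hy ihx ihy => rw [map_add, map_add, ihx, ihy]
  | mul x y hx hy ihx ihy => rw [map_mul, map_mul, ihx, ihy]


-- Abbreviation for the linear embedding of L⊗L into U⊗U
noncomputable def i2 : L ⊗[k] L →ₗ[k] (UniversalEnvelopingAlgebra k L) ⊗[k] (UniversalEnvelopingAlgebra k L) :=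
  TensorProduct.map (iL k L) (iL k L)

-- the "Δ₀" on generators
noncomputable def d0 (x : L) : (UniversalEnvelopingAlgebra k L) ⊗[k] (UniversalEnvelopingAlgebra k L) :=
  (iL k L x) ⊗ₜ[k] 1 + 1 ⊗ₜ[k] (iL k L x)

theorem map_adT (x : L) (t : L ⊗[k] L) :
    i2 (k := k) (L := L) (adT k L x t) = d0 x * i2 t - i2 t * d0 x := by
  induction t with
  | zero => simp
  | tmul s u =>
      simp only [adT, lieBr, i2, d0, LinearMap.add_apply, LinearMap.comp_apply,
        LinearMap.coe_rTensorHom, LinearMap.coe_lTensorHom, LinearMap.rTensor_tmul,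
        LinearMap.lTensor_tmul, LieHom.coe_toLinearMap, LieAlgebra.ad_apply, map_add,
        TensorProduct.map_tmul]
      have h1 : iL k L ⁅x, s⁆ = iL k L x * iL k L s - iL k L s * iL k L x := by
        show (ι k : L →ₗ⁅k⁆ UniversalEnvelopingAlgebra k L) ⁅x, s⁆ = _
        rw [LieHom.map_lie]; rfl
      have h2 : iL k L ⁅x, u⁆ = iL k L x * iL k L u - iL k L u * iL k L x := by
        show (ι k : L →ₗ⁅k⁆ UniversalEnvelopingAlgebra k L) ⁅x, u⁆ = _
        rw [LieHom.map_lie]; rfl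
      rw [h1, h2]
      simp only [add_mul, mul_add, Algebra.TensorProduct.tmul_mul_tmul, sub_tmul, tmul_sub,
        one_mul, mul_one]
      abel
  | add t₁ t₂ ih₁ ih₂ =>
      simp only [map_add, ih₁, ih₂]
      simp only [mul_add, add_mul]
      abel

theorem d0_bracket (x y : L) :
    d0 (k := k) ⁅x, y⁆ = d0 x * d0 y - d0 y * d0 x := by
  have h1 : iL k L ⁅x, y⁆ = iL k L x * iL k L y - iL k L y * iL k L x := by
    show (ι k : L →ₗ⁅k⁆ UniversalEnvelopingAlgebra k L) ⁅x, y⁆ = _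
    rw [LieHom.map_lie]; rfl
  simp only [d0, h1]
  simp only [add_mul, mul_add, Algebra.TensorProduct.tmul_mul_tmul, sub_tmul, tmul_sub,
    one_mul, mul_one]
  abel

/-- The Lie algebra morphism `L → TrivSqZeroExt (U⊗U) (U⊗U)`,
`x ↦ (Δ₀ x, (ι⊗ι)(δ x))`. -/
noncomputable def phi (δ : L →ₗ[k] L ⊗[k] L) (hδc : IsCocycle k L δ) :
    L →ₗ⁅k⁆ TrivSqZeroExt
      ((UniversalEnvelopingAlgebra k L) ⊗[k] (UniversalEnvelopingAlgebra k L))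
      ((UniversalEnvelopingAlgebra k L) ⊗[k] (UniversalEnvelopingAlgebra k L)) where
  toFun x := TrivSqZeroExt.inl (d0 x) + TrivSqZeroExt.inr (i2 (δ x))
  map_add' x y := by
    have h : d0 (k := k) (x + y) = d0 x + d0 y := by
      simp only [d0, map_add, add_tmul, tmul_add]; abel
    rw [h, map_add, map_add, TrivSqZeroExt.inl_add, TrivSqZeroExt.inr_add]
    abel
  map_smul' c x := by
    have h : d0 (k := k) (c • x) = c • d0 x := by
      simp only [d0, map_smul, smul_tmul', smul_add, tmul_smul]
    rw [h, map_smul, map_smul, TrivSqZeroExt.inl_smul, TrivSqZeroExt.inr_smul, RingHom.id_apply,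
      smul_add]
  map_lie' {x y} := by
    rw [LieRing.of_associative_ring_bracket]
    rw [d0_bracket, hδc x y, map_sub, map_adT, map_adT]
    simp only [TrivSqZeroExt.inl_sub, TrivSqZeroExt.inr_sub, TrivSqZeroExt.inr_add,
      mul_add, add_mul, TrivSqZeroExt.inl_mul_inl, TrivSqZeroExt.inl_mul_inr,
      TrivSqZeroExt.inr_mul_inl, TrivSqZeroExt.inr_mul_inr, smul_eq_mul, op_smul_eq_mul]
    abel
local notation "𝒰" => UniversalEnvelopingAlgebra k L
local notation "𝒜" => ((UniversalEnvelopingAlgebra k L) ⊗[k] (UniversalEnvelopingAlgebra k L))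

variable (δ : L →ₗ[k] L ⊗[k] L) (hδc : IsCocycle k L δ)

/-- The algebra morphism `U(g) → TrivSqZeroExt (U⊗U) (U⊗U)` extending `phi`. -/
noncomputable def Fh : 𝒰 →ₐ[k] TrivSqZeroExt 𝒜 𝒜 := lift k (phi δ hδc)

/-- The extension `D` of `δ` to `U(g)`. -/
noncomputable def Dm : 𝒰 →ₗ[k] 𝒜 where
  toFun u := (Fh δ hδc u).snd
  map_add' a b := by rw [map_add, TrivSqZeroExt.snd_add]
  map_smul' c a := by rw [map_smul, TrivSqZeroExt.snd_smul]; rfl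

theorem Fh_ι (x : L) : Fh δ hδc (iL k L x) =
    TrivSqZeroExt.inl (d0 x) + TrivSqZeroExt.inr (i2 (δ x)) := by
  show Fh δ hδc (ι k x) = _
  rw [Fh, lift_ι_apply]
  rfl

theorem Dm_ι (x : L) : Dm δ hδc (iL k L x) = i2 (δ x) := by
  show (Fh δ hδc (iL k L x)).snd = _
  rw [Fh_ι, TrivSqZeroExt.snd_add, TrivSqZeroExt.snd_inl, TrivSqZeroExt.snd_inr, zero_add]

theorem Dm_one : Dm δ hδc 1 = 0 := by
  show (Fh δ hδc 1).snd = 0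
  rw [map_one, TrivSqZeroExt.snd_one]

variable (Δ : UniversalEnvelopingAlgebra k L →ₐ[k]
      (UniversalEnvelopingAlgebra k L) ⊗[k] (UniversalEnvelopingAlgebra k L))
variable (hΔ : ∀ x : L, Δ (UniversalEnvelopingAlgebra.ι k x) =
      (UniversalEnvelopingAlgebra.ι k x) ⊗ₜ 1 + 1 ⊗ₜ (UniversalEnvelopingAlgebra.ι k x))

include hΔ

theorem Fh_fst : ∀ u, (Fh δ hδc u).fst = Δ u := by
  have key : (TrivSqZeroExt.fstHom k 𝒜 𝒜).comp (Fh δ hδc) = Δ := by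
    apply hom_ext
    apply LieHom.ext
    intro x
    show (TrivSqZeroExt.fstHom k 𝒜 𝒜) (Fh δ hδc (iL k L x)) = Δ (ι k x)
    rw [Fh_ι, hΔ, map_add, TrivSqZeroExt.fstHom_apply, TrivSqZeroExt.fstHom_apply,
      TrivSqZeroExt.fst_inl, TrivSqZeroExt.fst_inr, add_zero]
    rfl
  intro u
  have := congrArg (fun (f : 𝒰 →ₐ[k] 𝒜) => f u) key
  simpa using this

theorem Dm_mul (a b : 𝒰) :
    Dm δ hδc (a * b) = Dm δ hδc a * Δ b + Δ a * Dm δ hδc b := by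
  show (Fh δ hδc (a * b)).snd = _
  rw [map_mul, TrivSqZeroExt.snd_mul, Fh_fst δ hδc Δ hΔ a, Fh_fst δ hδc Δ hΔ b,
    smul_eq_mul, op_smul_eq_mul]
  show Δ a * Dm δ hδc b + Dm δ hδc a * Δ b = _
  exact add_comm _ _

omit hΔ

/-! ### Identifications of linear maps with algebra morphisms -/

theorem hass : ∀ t : (𝒜) ⊗[k] 𝒰,
    (TensorProduct.assoc k 𝒰 𝒰 𝒰) t = (Algebra.TensorProduct.assoc k k k 𝒰 𝒰 𝒰) t := by
  intro t
  induction t with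
  | zero => simp
  | add a b ha hb => rw [map_add, map_add, ha, hb]
  | tmul p c =>
      induction p with
      | zero => simp
      | add a b ha hb => rw [add_tmul, map_add, map_add, ha, hb]
      | tmul a b => simp [Algebra.TensorProduct.assoc_tmul]

theorem hσe : ∀ t : 𝒜,
    (TensorProduct.comm k 𝒰 𝒰) t = (Algebra.TensorProduct.comm k 𝒰 𝒰) t := by
  intro t
  induction t with
  | zero => simp
  | add a b ha hb => rw [map_add, map_add, ha, hb]
  | tmul a b => simp [Algebra.TensorProduct.comm_tmul]

theorem hcomm3 : ∀ t : 𝒰 ⊗[k] 𝒜,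
    (TensorProduct.comm k 𝒰 𝒜) t = (Algebra.TensorProduct.comm k 𝒰 𝒜) t := by
  intro t
  induction t with
  | zero => simp
  | add a b ha hb => rw [map_add, map_add, ha, hb]
  | tmul a b => simp [Algebra.TensorProduct.comm_tmul]

theorem hlΔe : ∀ t : 𝒜, (LinearMap.lTensor 𝒰 Δ.toLinearMap) t =
    (Algebra.TensorProduct.map (AlgHom.id k 𝒰) Δ) t := by
  intro t
  induction t with
  | zero => simp
  | add a b ha hb => rw [map_add, map_add, ha, hb]
  | tmul a b => simp [Algebra.TensorProduct.map_tmul]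

theorem hrΔe : ∀ t : 𝒜, (LinearMap.rTensor 𝒰 Δ.toLinearMap) t =
    (Algebra.TensorProduct.map Δ (AlgHom.id k 𝒰)) t := by
  intro t
  induction t with
  | zero => simp
  | add a b ha hb => rw [map_add, map_add, ha, hb]
  | tmul a b => simp [Algebra.TensorProduct.map_tmul]

theorem hσ23e : ∀ t : 𝒰 ⊗[k] 𝒜,
    (LinearMap.lTensor 𝒰 (TensorProduct.comm k 𝒰 𝒰).toLinearMap) t =
    (Algebra.TensorProduct.map (AlgHom.id k 𝒰)
      (Algebra.TensorProduct.comm k 𝒰 𝒰).toAlgHom) t := by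
  intro t
  induction t with
  | zero => simp
  | add a b ha hb => rw [map_add, map_add, ha, hb]
  | tmul a p =>
      induction p with
      | zero => simp
      | add a' b' ha hb => rw [tmul_add, map_add, map_add, ha, hb]
      | tmul b c =>
          simp [Algebra.TensorProduct.map_tmul, Algebra.TensorProduct.comm_tmul]

/-- The cyclic permutation on `U ⊗ (U ⊗ U)` as in the statement. -/
noncomputable def cU : 𝒰 ⊗[k] 𝒜 →ₗ[k] 𝒰 ⊗[k] 𝒜 :=
  (TensorProduct.assoc k 𝒰 𝒰 𝒰).toLinearMap ∘ₗ (TensorProduct.comm k 𝒰 𝒜).toLinearMap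

/-- The cyclic permutation as an algebra equivalence. -/
noncomputable def cUA : (𝒰 ⊗[k] 𝒜) ≃ₐ[k] 𝒰 ⊗[k] 𝒜 :=
  (Algebra.TensorProduct.comm k 𝒰 𝒜).trans (Algebra.TensorProduct.assoc k k k 𝒰 𝒰 𝒰)

theorem hcUe : ∀ t : 𝒰 ⊗[k] 𝒜, cU t = cUA t := by
  intro t
  rw [cU, cUA]
  simp only [LinearMap.comp_apply, LinearEquiv.coe_coe, AlgEquiv.trans_apply]
  rw [hcomm3, hass]

theorem cU_tmul (a b c : 𝒰) : cU (a ⊗ₜ[k] (b ⊗ₜ[k] c)) = b ⊗ₜ[k] (c ⊗ₜ[k] a) := by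
  rw [cU, LinearMap.comp_apply]
  simp

theorem cU_mul (s t : 𝒰 ⊗[k] 𝒜) : cU (s * t) = cU s * cU t := by
  rw [hcUe, hcUe, hcUe, map_mul]

theorem cU_cube : ∀ t : 𝒰 ⊗[k] 𝒜, cU (cU (cU t)) = t := by
  intro t
  induction t with
  | zero => simp
  | add a b ha hb => rw [map_add, map_add, map_add, ha, hb]
  | tmul a p =>
      induction p with
      | zero => simp [tmul_zero]
      | add a' b' ha hb => rw [tmul_add, map_add, map_add, map_add, ha, hb]
      | tmul b c => rw [cU_tmul, cU_tmul, cU_tmul]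

/-! ### Coalgebra identities for `Δ` -/

include hΔ in
theorem cocommA : ∀ u, (TensorProduct.comm k 𝒰 𝒰) (Δ u) = Δ u := by
  intro u
  rw [hσe]
  refine ahext (f := (((Algebra.TensorProduct.comm k 𝒰 𝒰) :
      (𝒰 ⊗[k] 𝒰) ≃ₐ[k] 𝒰 ⊗[k] 𝒰) : (𝒰 ⊗[k] 𝒰) →ₐ[k] 𝒰 ⊗[k] 𝒰).comp Δ) (g := Δ) ?_ u
  intro x
  show (Algebra.TensorProduct.comm k 𝒰 𝒰) (Δ (ι k x)) = Δ (ι k x)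
  rw [hΔ, map_add, Algebra.TensorProduct.comm_tmul, Algebra.TensorProduct.comm_tmul,
    add_comm]

/-- The iterated comultiplication `(1⊗Δ)∘Δ` as an algebra morphism. -/
noncomputable def ΦA : 𝒰 →ₐ[k] 𝒰 ⊗[k] 𝒜 :=
  (Algebra.TensorProduct.map (AlgHom.id k 𝒰) Δ).comp Δ

include hΔ in
theorem ΦA_ι (x : L) : ΦA Δ (ι k x) =
    (ι k x : 𝒰) ⊗ₜ[k] ((1 : 𝒰) ⊗ₜ[k] (1 : 𝒰)) +
      ((1 : 𝒰) ⊗ₜ[k] ((ι k x : 𝒰) ⊗ₜ[k] (1 : 𝒰)) +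
        (1 : 𝒰) ⊗ₜ[k] ((1 : 𝒰) ⊗ₜ[k] (ι k x : 𝒰))) := by
  show (Algebra.TensorProduct.map (AlgHom.id k 𝒰) Δ) (Δ (ι k x)) = _
  rw [hΔ, map_add, Algebra.TensorProduct.map_tmul, Algebra.TensorProduct.map_tmul]
  rw [map_one, hΔ, tmul_add]
  rfl

include hΔ in
theorem coassoc : ∀ u, (TensorProduct.assoc k 𝒰 𝒰 𝒰)
    ((LinearMap.rTensor 𝒰 Δ.toLinearMap) (Δ u)) = ΦA Δ u := by
  intro u
  rw [hass, hrΔe]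
  refine ahext (f := ((Algebra.TensorProduct.assoc k k k 𝒰 𝒰 𝒰 :
        ((𝒰 ⊗[k] 𝒰) ⊗[k] 𝒰) ≃ₐ[k] 𝒰 ⊗[k] 𝒜) :
        ((𝒰 ⊗[k] 𝒰) ⊗[k] 𝒰) →ₐ[k] 𝒰 ⊗[k] 𝒜).comp
      ((Algebra.TensorProduct.map Δ (AlgHom.id k 𝒰)).comp Δ)) (g := ΦA Δ) ?_ u
  intro x
  show (Algebra.TensorProduct.assoc k k k 𝒰 𝒰 𝒰)
    ((Algebra.TensorProduct.map Δ (AlgHom.id k 𝒰)) (Δ (ι k x))) = ΦA Δ (ι k x)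
  rw [ΦA_ι Δ hΔ x]
  simp only [hΔ, map_add, Algebra.TensorProduct.map_tmul, map_one, AlgHom.coe_id, id_eq,
    add_tmul, Algebra.TensorProduct.one_def, Algebra.TensorProduct.assoc_tmul]
  abel

include hΔ in
theorem cUΦ : ∀ u, cU (ΦA Δ u) = ΦA Δ u := by
  intro u
  rw [hcUe]
  refine ahext (f := ((cUA : (𝒰 ⊗[k] 𝒜) ≃ₐ[k] 𝒰 ⊗[k] 𝒜) :
      (𝒰 ⊗[k] 𝒜) →ₐ[k] 𝒰 ⊗[k] 𝒜).comp (ΦA Δ)) (g := ΦA Δ) ?_ u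
  intro x
  show cUA (ΦA Δ (ι k x)) = ΦA Δ (ι k x)
  rw [ΦA_ι Δ hΔ x, map_add, map_add]
  rw [← hcUe, ← hcUe, ← hcUe, cU_tmul, cU_tmul, cU_tmul]
  abel

include hΔ in
theorem σ23Φ : ∀ u, (LinearMap.lTensor 𝒰 (TensorProduct.comm k 𝒰 𝒰).toLinearMap)
    (ΦA Δ u) = ΦA Δ u := by
  intro u
  rw [hσ23e]
  refine ahext (f := (Algebra.TensorProduct.map (AlgHom.id k 𝒰)
      ((Algebra.TensorProduct.comm k 𝒰 𝒰 : (𝒰 ⊗[k] 𝒰) ≃ₐ[k] 𝒰 ⊗[k] 𝒰) :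
        (𝒰 ⊗[k] 𝒰) →ₐ[k] 𝒰 ⊗[k] 𝒰)).comp (ΦA Δ)) (g := ΦA Δ) ?_ u
  intro x
  show (Algebra.TensorProduct.map (AlgHom.id k 𝒰)
    ((Algebra.TensorProduct.comm k 𝒰 𝒰).toAlgHom)) (ΦA Δ (ι k x)) = ΦA Δ (ι k x)
  rw [ΦA_ι Δ hΔ x, map_add, map_add]
  simp only [Algebra.TensorProduct.map_tmul, AlgHom.coe_id, id_eq,
    AlgEquiv.toAlgHom_eq_coe, AlgHom.coe_coe, AlgEquiv.coe_toAlgHom, Algebra.TensorProduct.comm_tmul]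
  abel

/-! ### Co-skewness of `Dm` -/

theorem σ_mul (s t : 𝒜) : (TensorProduct.comm k 𝒰 𝒰) (s * t) =
    (TensorProduct.comm k 𝒰 𝒰) s * (TensorProduct.comm k 𝒰 𝒰) t := by
  rw [hσe, hσe, hσe, map_mul]

theorem i2comm : ∀ t : L ⊗[k] L, (TensorProduct.comm k 𝒰 𝒰) (i2 t) =
    i2 ((TensorProduct.comm k L L) t) := by
  intro t
  induction t with
  | zero => simp
  | add a b ha hb => simp only [map_add, ha, hb]
  | tmul a b => simp [i2]

include hΔ in
theorem Dm_coskew (hsk : IsCoSkew k L δ) :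
    ∀ u, (TensorProduct.comm k 𝒰 𝒰) (Dm δ hδc u) = - Dm δ hδc u := by
  have key : (TensorProduct.comm k 𝒰 𝒰).toLinearMap ∘ₗ Dm δ hδc = - Dm δ hδc := by
    apply derivation_ext (Φ := Δ)
    · intro a b
      simp only [LinearMap.comp_apply, LinearEquiv.coe_coe]
      rw [Dm_mul δ hδc Δ hΔ, map_add, σ_mul, σ_mul, cocommA Δ hΔ a, cocommA Δ hΔ b]
    · intro a b
      simp only [LinearMap.neg_apply]
      rw [Dm_mul δ hδc Δ hΔ, neg_add, neg_mul, mul_neg]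
    · intro x
      simp only [LinearMap.comp_apply, LinearEquiv.coe_coe, LinearMap.neg_apply]
      rw [Dm_ι, i2comm, hsk x, map_neg]
  intro u
  have := congrArg (fun (f : UniversalEnvelopingAlgebra k L →ₗ[k]
    (UniversalEnvelopingAlgebra k L) ⊗[k] (UniversalEnvelopingAlgebra k L)) => f u) key
  simpa using this

/-! ### Product rules for `rTensor D` and `lTensor D` -/

include hΔ in
theorem rD_mul (u v : 𝒜) : LinearMap.rTensor 𝒰 (Dm δ hδc) (u * v) =
    LinearMap.rTensor 𝒰 (Dm δ hδc) u * (Algebra.TensorProduct.map Δ (AlgHom.id k 𝒰)) v +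
      (Algebra.TensorProduct.map Δ (AlgHom.id k 𝒰)) u *
        LinearMap.rTensor 𝒰 (Dm δ hδc) v := by
  induction u with
  | zero => simp
  | add a b ha hb =>
      rw [add_mul, map_add, ha, hb, map_add, map_add, add_mul, add_mul]
      abel
  | tmul a₁ a₂ =>
      induction v with
      | zero => simp
      | add a b ha hb =>
          rw [mul_add, map_add, ha, hb, map_add, map_add, mul_add, mul_add]
          abel
      | tmul b₁ b₂ =>
          rw [Algebra.TensorProduct.tmul_mul_tmul, LinearMap.rTensor_tmul,
            LinearMap.rTensor_tmul, LinearMap.rTensor_tmul,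
            Algebra.TensorProduct.map_tmul, Algebra.TensorProduct.map_tmul,
            Dm_mul δ hδc Δ hΔ, add_tmul, Algebra.TensorProduct.tmul_mul_tmul,
            Algebra.TensorProduct.tmul_mul_tmul]
          rfl

include hΔ in
theorem lD_mul (u v : 𝒜) : LinearMap.lTensor 𝒰 (Dm δ hδc) (u * v) =
    LinearMap.lTensor 𝒰 (Dm δ hδc) u * (Algebra.TensorProduct.map (AlgHom.id k 𝒰) Δ) v +
      (Algebra.TensorProduct.map (AlgHom.id k 𝒰) Δ) u *
        LinearMap.lTensor 𝒰 (Dm δ hδc) v := by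
  induction u with
  | zero => simp
  | add a b ha hb =>
      rw [add_mul, map_add, ha, hb, map_add, map_add, add_mul, add_mul]
      abel
  | tmul a₁ a₂ =>
      induction v with
      | zero => simp
      | add a b ha hb =>
          rw [mul_add, map_add, ha, hb, map_add, map_add, mul_add, mul_add]
          abel
      | tmul b₁ b₂ =>
          rw [Algebra.TensorProduct.tmul_mul_tmul, LinearMap.lTensor_tmul,
            LinearMap.lTensor_tmul, LinearMap.lTensor_tmul,
            Algebra.TensorProduct.map_tmul, Algebra.TensorProduct.map_tmul,
            Dm_mul δ hδc Δ hΔ, tmul_add, Algebra.TensorProduct.tmul_mul_tmul,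
            Algebra.TensorProduct.tmul_mul_tmul]
          rfl

/-! ### The co-Leibniz rule -/

/-- `P = assoc ∘ (D ⊗ 1) ∘ Δ`. -/
noncomputable def Pm : UniversalEnvelopingAlgebra k L →ₗ[k]
    𝒰 ⊗[k] 𝒜 :=
  (TensorProduct.assoc k 𝒰 𝒰 𝒰).toLinearMap ∘ₗ
    (LinearMap.rTensor 𝒰 (Dm δ hδc)) ∘ₗ Δ.toLinearMap

theorem assoc_mul (s t : (𝒜) ⊗[k] 𝒰) :
    (TensorProduct.assoc k 𝒰 𝒰 𝒰) (s * t) =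
    (TensorProduct.assoc k 𝒰 𝒰 𝒰) s * (TensorProduct.assoc k 𝒰 𝒰 𝒰) t := by
  rw [hass, hass, hass, map_mul]

theorem σ23_mul (s t : 𝒰 ⊗[k] 𝒜) :
    (LinearMap.lTensor 𝒰 (TensorProduct.comm k 𝒰 𝒰).toLinearMap) (s * t) =
    (LinearMap.lTensor 𝒰 (TensorProduct.comm k 𝒰 𝒰).toLinearMap) s *
      (LinearMap.lTensor 𝒰 (TensorProduct.comm k 𝒰 𝒰).toLinearMap) t := by
  rw [hσ23e, hσ23e, hσ23e, map_mul]

theorem cU_one : cU (1 : 𝒰 ⊗[k] 𝒜) = 1 := by rw [hcUe]; exact map_one _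

include hΔ in
theorem Pm_mul (a b : UniversalEnvelopingAlgebra k L) :
    Pm δ hδc Δ (a * b) = Pm δ hδc Δ a * ΦA Δ b + ΦA Δ a * Pm δ hδc Δ b := by
  have h1 : ∀ u, (TensorProduct.assoc k 𝒰 𝒰 𝒰)
      ((Algebra.TensorProduct.map Δ (AlgHom.id k 𝒰)) (Δ u)) = ΦA Δ u := by
    intro u; rw [← hrΔe]; exact coassoc Δ hΔ u
  show (TensorProduct.assoc k 𝒰 𝒰 𝒰) ((LinearMap.rTensor 𝒰 (Dm δ hδc)) (Δ (a * b))) = _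
  rw [map_mul, rD_mul δ hδc Δ hΔ, map_add, assoc_mul, assoc_mul, h1, h1]
  rfl

include hΔ in
theorem σ23Pm_mul (a b : UniversalEnvelopingAlgebra k L) :
    (LinearMap.lTensor 𝒰 (TensorProduct.comm k 𝒰 𝒰).toLinearMap) (Pm δ hδc Δ (a * b)) =
      (LinearMap.lTensor 𝒰 (TensorProduct.comm k 𝒰 𝒰).toLinearMap) (Pm δ hδc Δ a) * ΦA Δ b +
      ΦA Δ a *
        (LinearMap.lTensor 𝒰 (TensorProduct.comm k 𝒰 𝒰).toLinearMap) (Pm δ hδc Δ b) := by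
  rw [Pm_mul δ hδc Δ hΔ, map_add, σ23_mul, σ23_mul, σ23Φ Δ hΔ, σ23Φ Δ hΔ]

include hΔ in
theorem coLeib : ∀ u, (LinearMap.lTensor 𝒰 Δ.toLinearMap) (Dm δ hδc u) =
    Pm δ hδc Δ u +
      (LinearMap.lTensor 𝒰 (TensorProduct.comm k 𝒰 𝒰).toLinearMap) (Pm δ hδc Δ u) := by
  have key : (LinearMap.lTensor 𝒰 Δ.toLinearMap) ∘ₗ Dm δ hδc =
      Pm δ hδc Δ +
        (LinearMap.lTensor 𝒰 (TensorProduct.comm k 𝒰 𝒰).toLinearMap) ∘ₗ Pm δ hδc Δ := by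
    apply derivation_ext (Φ := ΦA Δ)
    · intro a b
      simp only [LinearMap.comp_apply]
      rw [Dm_mul δ hδc Δ hΔ, map_add, hlΔe, hlΔe, hlΔe, map_mul, map_mul]
      have h2 : ∀ u, (Algebra.TensorProduct.map (AlgHom.id k 𝒰) Δ) (Δ u) = ΦA Δ u :=
        fun u => rfl
      rw [h2, h2, ← hlΔe, ← hlΔe]
    · intro a b
      simp only [LinearMap.add_apply, LinearMap.comp_apply]
      rw [Pm_mul δ hδc Δ hΔ, map_add, σ23_mul, σ23_mul, σ23Φ Δ hΔ, σ23Φ Δ hΔ]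
      simp only [add_mul, mul_add]
      abel
    · intro x
      simp only [LinearMap.comp_apply, LinearMap.add_apply]
      rw [Dm_ι]
      have hP : Pm δ hδc Δ (iL k L x) =
          (TensorProduct.assoc k 𝒰 𝒰 𝒰) ((i2 (δ x)) ⊗ₜ[k] (1 : 𝒰)) := by
        show (TensorProduct.assoc k 𝒰 𝒰 𝒰)
          ((LinearMap.rTensor 𝒰 (Dm δ hδc)) (Δ (ι k x))) = _
        rw [hΔ, map_add, LinearMap.rTensor_tmul, LinearMap.rTensor_tmul]
        rw [show (Dm δ hδc) ((1 : 𝒰)) = 0 from Dm_one δ hδc,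
          show (Dm δ hδc) (ι k x) = i2 (δ x) from Dm_ι δ hδc x]
        rw [zero_tmul, add_zero]
      rw [hP]
      -- now both sides are linear in `δ x`; induct
      generalize δ x = t
      induction t with
      | zero => simp
      | add a b ha hb =>
          simp only [map_add, add_tmul, tmul_add] at ha hb ⊢
          rw [ha, hb]
          abel
      | tmul s u =>
          simp only [i2, TensorProduct.map_tmul]
          rw [LinearMap.lTensor_tmul]
          show (iL k L s) ⊗ₜ[k] (Δ (ι k u)) = _
          rw [hΔ, tmul_add, assoc_tmul, LinearMap.lTensor_tmul]
          simp [iL, UniversalEnvelopingAlgebra.ι_apply]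
  intro u
  have := congrArg (fun (f : UniversalEnvelopingAlgebra k L →ₗ[k] 𝒰 ⊗[k] 𝒜) => f u) key
  simpa using this

/-! ### The co-Jacobi identity -/

theorem Dσswap : ∀ t : 𝒜, (LinearMap.lTensor 𝒰 (Dm δ hδc)) ((TensorProduct.comm k 𝒰 𝒰) t) =
    (TensorProduct.comm k (𝒜) 𝒰) ((LinearMap.rTensor 𝒰 (Dm δ hδc)) t) := by
  intro t
  induction t with
  | zero => simp
  | add a b ha hb => simp only [map_add, ha, hb]
  | tmul a b => simp

theorem commAU_c2 : ∀ s : (𝒜) ⊗[k] 𝒰,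
    (TensorProduct.comm k (𝒜) 𝒰) s = cU (cU ((TensorProduct.assoc k 𝒰 𝒰 𝒰) s)) := by
  intro s
  induction s with
  | zero => simp
  | add a b ha hb => simp only [map_add, ha, hb]
  | tmul p c =>
      induction p with
      | zero => simp
      | add a b ha hb =>
          simp only [add_tmul, map_add, ha, hb]
      | tmul a b => rw [comm_tmul, assoc_tmul, cU_tmul, cU_tmul]

include hΔ in
theorem lDΔ_eq : ∀ u, (LinearMap.lTensor 𝒰 (Dm δ hδc)) (Δ u) = cU (cU (Pm δ hδc Δ u)) := by
  intro u
  conv_lhs => rw [← cocommA Δ hΔ u]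
  rw [Dσswap, commAU_c2]
  rfl

theorem σ23assoc : ∀ s : (𝒜) ⊗[k] 𝒰,
    (LinearMap.lTensor 𝒰 (TensorProduct.comm k 𝒰 𝒰).toLinearMap)
      ((TensorProduct.assoc k 𝒰 𝒰 𝒰) s) =
    cU ((TensorProduct.assoc k 𝒰 𝒰 𝒰)
      ((LinearMap.rTensor 𝒰 (TensorProduct.comm k 𝒰 𝒰).toLinearMap) s)) := by
  intro s
  induction s with
  | zero => simp
  | add a b ha hb => simp only [map_add, ha, hb]
  | tmul p c =>
      induction p with
      | zero => simp
      | add a b ha hb => simp only [add_tmul, map_add, ha, hb]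
      | tmul a b =>
          rw [assoc_tmul, LinearMap.lTensor_tmul, LinearMap.rTensor_tmul]
          simp only [LinearEquiv.coe_coe, comm_tmul, assoc_tmul, cU_tmul]

include hΔ in
theorem rTcommD (hsk : IsCoSkew k L δ) : ∀ t : 𝒜,
    (LinearMap.rTensor 𝒰 (TensorProduct.comm k 𝒰 𝒰).toLinearMap)
      ((LinearMap.rTensor 𝒰 (Dm δ hδc)) t) = - (LinearMap.rTensor 𝒰 (Dm δ hδc)) t := by
  intro t
  induction t with
  | zero => simp
  | add a b ha hb => simp only [map_add, ha, hb]; abel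
  | tmul a b =>
      rw [LinearMap.rTensor_tmul, LinearMap.rTensor_tmul]
      simp only [LinearEquiv.coe_coe]
      rw [Dm_coskew δ hδc Δ hΔ hsk a, neg_tmul]

include hΔ in
theorem σ23Pm (hsk : IsCoSkew k L δ) : ∀ u,
    (LinearMap.lTensor 𝒰 (TensorProduct.comm k 𝒰 𝒰).toLinearMap) (Pm δ hδc Δ u) =
      - cU (Pm δ hδc Δ u) := by
  intro u
  show (LinearMap.lTensor 𝒰 (TensorProduct.comm k 𝒰 𝒰).toLinearMap)
    ((TensorProduct.assoc k 𝒰 𝒰 𝒰) ((LinearMap.rTensor 𝒰 (Dm δ hδc)) (Δ u))) = _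
  rw [σ23assoc, rTcommD δ hδc Δ hΔ hsk, map_neg, map_neg]
  rfl

include hΔ in
theorem coLeib' (hsk : IsCoSkew k L δ) :
    ∀ u, (LinearMap.lTensor 𝒰 Δ.toLinearMap) (Dm δ hδc u) =
    Pm δ hδc Δ u - cU (Pm δ hδc Δ u) := by
  intro u
  rw [coLeib δ hδc Δ hΔ u, σ23Pm δ hδc Δ hΔ hsk u, sub_eq_add_neg]

/-- The map `E = (1 ⊗ D) ∘ D`. -/
noncomputable def Em : UniversalEnvelopingAlgebra k L →ₗ[k] 𝒰 ⊗[k] 𝒜 :=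
  (LinearMap.lTensor 𝒰 (Dm δ hδc)) ∘ₗ Dm δ hδc

include hΔ in
theorem Em_mul (hsk : IsCoSkew k L δ) (a b : UniversalEnvelopingAlgebra k L) :
    Em δ hδc (a * b) = Em δ hδc a * ΦA Δ b +
      ((Pm δ hδc Δ a - cU (Pm δ hδc Δ a)) * cU (cU (Pm δ hδc Δ b)) +
        cU (cU (Pm δ hδc Δ a)) * (Pm δ hδc Δ b - cU (Pm δ hδc Δ b))) +
      ΦA Δ a * Em δ hδc b := by
  show (LinearMap.lTensor 𝒰 (Dm δ hδc)) (Dm δ hδc (a * b)) = _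
  rw [Dm_mul δ hδc Δ hΔ, map_add, lD_mul δ hδc Δ hΔ, lD_mul δ hδc Δ hΔ]
  rw [← hlΔe, ← hlΔe, ← hlΔe, ← hlΔe]
  have h3 : ∀ u, (LinearMap.lTensor 𝒰 Δ.toLinearMap) (Δ u) = ΦA Δ u :=
    fun u => by rw [hlΔe]; rfl
  have hE : ∀ c, (LinearMap.lTensor 𝒰 (Dm δ hδc)) ((Dm δ hδc) c) = Em δ hδc c :=
    fun _ => rfl
  simp only [h3, hE, coLeib' δ hδc Δ hΔ hsk, lDΔ_eq δ hδc Δ hΔ]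
  abel

theorem i3E : ∀ t : L ⊗[k] L, (LinearMap.lTensor 𝒰 (Dm δ hδc)) (i2 t) =
    (TensorProduct.map (iL k L) (i2 (k := k) (L := L)))
      ((LinearMap.lTensor L δ) t) := by
  intro t
  induction t with
  | zero => simp
  | add a b ha hb => simp only [map_add, ha, hb]
  | tmul s u =>
      simp only [i2, TensorProduct.map_tmul, LinearMap.lTensor_tmul]
      rw [show (Dm δ hδc) ((iL k L) u) = TensorProduct.map (iL k L) (iL k L) (δ u) from
        Dm_ι δ hδc u]

theorem hcUi3 : ∀ w : L ⊗[k] (L ⊗[k] L),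
    cU ((TensorProduct.map (iL k L) (i2 (k := k) (L := L))) w) =
    (TensorProduct.map (iL k L) (i2 (k := k) (L := L))) (cyc k L w) := by
  intro w
  induction w with
  | zero => simp
  | add a b ha hb => simp only [map_add, ha, hb]
  | tmul a t =>
      induction t with
      | zero => simp [tmul_zero]
      | add s' t' hs ht => simp only [tmul_add, map_add, hs, ht]
      | tmul b c =>
          simp only [TensorProduct.map_tmul, i2, cyc, LinearMap.comp_apply,
            LinearEquiv.coe_coe, comm_tmul, assoc_tmul]
          rw [cU_tmul]

include hΔ in
theorem coJac (hsk : IsCoSkew k L δ) (hcj : IsCoJacobi k L δ) :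
    ∀ u, Em δ hδc u + cU (Em δ hδc u) + cU (cU (Em δ hδc u)) = 0 := by
  have key : Em δ hδc + cU ∘ₗ Em δ hδc + cU ∘ₗ cU ∘ₗ Em δ hδc =
      (0 : UniversalEnvelopingAlgebra k L →ₗ[k] 𝒰 ⊗[k] 𝒜) := by
    apply derivation_ext (B := 𝒰 ⊗[k] 𝒜) (Φ := ΦA Δ)
    · intro a b
      simp only [LinearMap.add_apply, LinearMap.comp_apply]
      rw [Em_mul δ hδc Δ hΔ hsk a b]
      simp only [map_add, map_sub, cU_mul, cU_cube, cUΦ Δ hΔ]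
      simp only [sub_mul, mul_sub, add_mul, mul_add]
      abel
    · intro a b
      simp only [LinearMap.zero_apply, zero_mul, mul_zero, add_zero]
    · intro x
      have hE : Em δ hδc (iL k L x) =
          (TensorProduct.map (iL k L) (i2 (k := k) (L := L)))
            ((LinearMap.lTensor L δ) (δ x)) := by
        show (LinearMap.lTensor 𝒰 (Dm δ hδc)) (Dm δ hδc (iL k L x)) = _
        rw [Dm_ι, i3E]
      simp only [LinearMap.add_apply, LinearMap.comp_apply, LinearMap.zero_apply]
      rw [hE, hcUi3, hcUi3, ← map_add, ← map_add, hcj x, map_zero]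
  intro u
  have := congrArg (fun (f : UniversalEnvelopingAlgebra k L →ₗ[k] 𝒰 ⊗[k] 𝒜) => f u) key
  simpa using this

end Stmt4Aux

theorem stmt4 (δ : L →ₗ[k] L ⊗[k] L) (hδ : IsLieCobracket k L δ)
    (Δ : UniversalEnvelopingAlgebra k L →ₐ[k]
      (UniversalEnvelopingAlgebra k L) ⊗[k] (UniversalEnvelopingAlgebra k L))
    (hΔ : ∀ x : L, Δ (UniversalEnvelopingAlgebra.ι k x) =
      (UniversalEnvelopingAlgebra.ι k x) ⊗ₜ 1 + 1 ⊗ₜ (UniversalEnvelopingAlgebra.ι k x)) :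
    ∃ D : UniversalEnvelopingAlgebra k L →ₗ[k]
        (UniversalEnvelopingAlgebra k L) ⊗[k] (UniversalEnvelopingAlgebra k L),
      -- D extends δ :
      (∀ x : L, D (UniversalEnvelopingAlgebra.ι k x) =
        (TensorProduct.map (UniversalEnvelopingAlgebra.ι k : L →ₗ⁅k⁆ _).toLinearMap
          (UniversalEnvelopingAlgebra.ι k : L →ₗ⁅k⁆ _).toLinearMap) (δ x)) ∧
      -- co-skew-symmetry :
      (∀ u, (TensorProduct.comm k _ _) (D u) = -(D u)) ∧
      -- the Leibniz compatibility δ(ab) = δ(a)Δ(b) + Δ(a)δ(b) :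
      (∀ a b, D (a * b) = (D a) * (Δ b) + (Δ a) * (D b)) ∧
      -- the co-Leibniz rule (1⊗Δ)∘D = (D⊗1)∘Δ + σ₂₃∘(D⊗1)∘Δ :
      (∀ u, (LinearMap.lTensor _ Δ.toLinearMap) (D u) =
        (TensorProduct.assoc k _ _ _).toLinearMap ((LinearMap.rTensor _ D) (Δ u)) +
          (LinearMap.lTensor _ (TensorProduct.comm k _ _).toLinearMap)
            ((TensorProduct.assoc k _ _ _).toLinearMap
              ((LinearMap.rTensor _ D) (Δ u)))) ∧
      -- the co-Jacobi identity :
      (∀ u, (LinearMap.lTensor _ D) (D u) +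
        ((TensorProduct.assoc k _ _ _).toLinearMap ∘ₗ
          (TensorProduct.comm k _ _).toLinearMap) ((LinearMap.lTensor _ D) (D u)) +
        ((TensorProduct.assoc k _ _ _).toLinearMap ∘ₗ
          (TensorProduct.comm k _ _).toLinearMap)
          (((TensorProduct.assoc k _ _ _).toLinearMap ∘ₗ
            (TensorProduct.comm k _ _).toLinearMap)
            ((LinearMap.lTensor _ D) (D u))) = 0) := by
  obtain ⟨hsk, hcc, hcj⟩ := hδ
  refine ⟨Dm δ hcc, ?_, ?_, ?_, ?_, ?_⟩
  · intro x; exact Dm_ι δ hcc x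
  · intro u; exact Dm_coskew δ hcc Δ hΔ hsk u
  · intro a b; exact Dm_mul δ hcc Δ hΔ a b
  · intro u; exact coLeib δ hcc Δ hΔ u
  · intro u; exact coJac δ hcc Δ hΔ hsk hcj u
end

section
/- Let a be a finite-dimensional Lie algebra over a field k, together with a Lie algebra structure on a*. Define on D(a) = a ⊕ a* the skew-symmetric bracket extending the brackets of a and a* by [x, ξ] = ad*_a(x)(ξ) − ad*_{a*}(ξ)(x) for x ∈ a, ξ ∈ a*. Then this bracket satisfies the Jacobi identity if and only if the cobracket δ: a → a ∧ a dual to the bracket on a* makes (a, [·,·], δ) a Lie bialgebra. -/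
/- STATEMENT 5: Let a be a finite-dimensional Lie algebra over a field k,
together with a Lie algebra structure β on a*.  The skew-symmetric bracket on
D(a) = a ⊕ a* extending the brackets of a and a* by
[x,ξ] = ad*_a(x)(ξ) − ad*_{a*}(ξ)(x) satisfies the Jacobi identity if and
only if the cobracket δ : a → a ⊗ a dual to β satisfies the cocycle identity
δ([x,y]) = [δ(x), y⊗1+1⊗y] + [x⊗1+1⊗x, δ(y)], i.e. makes (a,[·,·],δ) a Lie
bialgebra (β being a Lie bracket already accounts for the other axioms). -/

open TensorProduct

variable (k : Type*) [Field k] [CharZero k]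
variable (L : Type*) [LieRing L] [LieAlgebra k L]

attribute [local instance 100] LieRing.ofAssociativeRing

variable [FiniteDimensional k L]

/-- The coadjoint action of `a` on `a*` : `(x·η)(y) = −η([x,y])`. -/
noncomputable def coadA (x : L) (η : Module.Dual k L) : Module.Dual k L :=
  -(η ∘ₗ ((LieAlgebra.ad k L) x))

/-- The coadjoint action of `a*` on `a = (a*)*` :
`(ξ·x)` is the element of `a` with `⟨ξ·x, η⟩ = −(ev x)(β ξ η)`. -/
noncomputable def coadD (β : Module.Dual k L →ₗ[k] Module.Dual k L →ₗ[k] Module.Dual k L)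
    (ξ : Module.Dual k L) (x : L) : L :=
  (Module.evalEquiv k L).symm (-(((Module.Dual.eval k L) x) ∘ₗ (β ξ)))

/-- The bracket of the double `D(a) = a ⊕ a*`. -/
noncomputable def doubleBracket
    (β : Module.Dual k L →ₗ[k] Module.Dual k L →ₗ[k] Module.Dual k L)
    (p q : L × Module.Dual k L) : L × Module.Dual k L :=
  (⁅p.1, q.1⁆ - coadD k L β q.2 p.1 + coadD k L β p.2 q.1,
    β p.2 q.2 + coadA k L p.1 q.2 - coadA k L q.1 p.2)

/-- The cobracket `δ : a → a ⊗ a` dual to the bracket `β` on `a*`. -/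
noncomputable def dualCobracket
    (β : Module.Dual k L →ₗ[k] Module.Dual k L →ₗ[k] Module.Dual k L) :
    L →ₗ[k] L ⊗[k] L :=
  (TensorProduct.congr (Module.evalEquiv k L).symm
      (Module.evalEquiv k L).symm).toLinearMap ∘ₗ
    (TensorProduct.dualDistribEquiv k (Module.Dual k L)
        (Module.Dual k L)).symm.toLinearMap ∘ₗ
    (LinearMap.dualMap (TensorProduct.lift β)) ∘ₗ
    (Module.evalEquiv k L).toLinearMap

section Aux
open Module LinearMap TensorProduct
variable (k : Type*) [Field k] [CharZero k]
variable (L : Type*) [LieRing L] [LieAlgebra k L] [FiniteDimensional k L]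
variable (β : Module.Dual k L →ₗ[k] Module.Dual k L →ₗ[k] Module.Dual k L)

lemma coadD_apply (ξ θ : Module.Dual k L) (x : L) :
    θ (coadD k L β ξ x) = -(β ξ θ x) := by
  have := Module.apply_evalEquiv_symm_apply (R := k) (M := L) θ
    (-(((Module.Dual.eval k L) x) ∘ₗ (β ξ)))
  simpa [coadD] using this

lemma coadA_apply (x : L) (η : Module.Dual k L) (y : L) :
    coadA k L x η y = -η ⁅x, y⁆ := rfl

lemma coadA_eq (x : L) (η : Module.Dual k L) :
    coadA k L x η = -(η ∘ₗ (LieAlgebra.ad k L x : L →ₗ[k] L)) := rfl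

end Aux
section Aux2
set_option linter.unusedSectionVars false
set_option maxHeartbeats 1000000
open Module LinearMap TensorProduct
variable (k : Type*) [Field k] [CharZero k]
variable (L : Type*) [LieRing L] [LieAlgebra k L] [FiniteDimensional k L]
variable (β : Module.Dual k L →ₗ[k] Module.Dual k L →ₗ[k] Module.Dual k L)

/-- scalar pairing of a tensor against ξ⊗η -/
noncomputable def dpr (ξ η : Module.Dual k L) : (L ⊗[k] L) →ₗ[k] k :=
  TensorProduct.dualDistrib k L L (ξ ⊗ₜ η)

lemma dpr_tmul (ξ η : Module.Dual k L) (a b : L) :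
    dpr k L ξ η (a ⊗ₜ b) = η b * ξ a := by
  simp [dpr, TensorProduct.dualDistrib_apply, smul_eq_mul, mul_comm]

lemma eq_zero_of_dpr (t : L ⊗[k] L) (h : ∀ ξ η : Module.Dual k L, dpr k L ξ η t = 0) :
    t = 0 := by
  have h' : ∀ s : Module.Dual k L ⊗[k] Module.Dual k L,
      TensorProduct.dualDistrib k L L s t = 0 := by
    intro s
    induction s using TensorProduct.induction_on with
    | zero => simp
    | tmul ξ η => exact h ξ η
    | add s1 s2 h1 h2 => simp only [map_add, LinearMap.add_apply, h1, h2, add_zero]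
  rw [← Module.forall_dual_apply_eq_zero_iff k]
  intro φ
  obtain ⟨s, rfl⟩ := (TensorProduct.dualDistribEquiv k L L).surjective φ
  exact h' s

lemma dpr_dualCobracket (ξ η : Module.Dual k L) (x : L) :
    dpr k L ξ η (dualCobracket k L β x) = β ξ η x := by
  set E := Module.evalEquiv k L
  set φ : Module.Dual k (Module.Dual k L ⊗[k] Module.Dual k L) :=
    (LinearMap.dualMap (TensorProduct.lift β)) ((Module.evalEquiv k L).toLinearMap x)
  have hd : dualCobracket k L β x =
      (TensorProduct.congr E.symm E.symm).toLinearMap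
        ((TensorProduct.dualDistribEquiv k (Module.Dual k L) (Module.Dual k L)).symm φ) := rfl
  set s := (TensorProduct.dualDistribEquiv k (Module.Dual k L) (Module.Dual k L)).symm φ
    with hs
  have key : ∀ s' : Module.Dual k (Module.Dual k L) ⊗[k] Module.Dual k (Module.Dual k L),
      dpr k L ξ η ((TensorProduct.congr E.symm E.symm).toLinearMap s') =
        TensorProduct.dualDistrib k (Module.Dual k L) (Module.Dual k L) s' (ξ ⊗ₜ η) := by
    intro s'
    induction s' using TensorProduct.induction_on with
    | zero => simp only [map_zero, LinearMap.map_zero]; simp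
    | tmul F G =>
        simp [dpr, E, Module.apply_evalEquiv_symm_apply]
    | add a b ha hb => simp only [map_add, LinearMap.add_apply, ha, hb]
  rw [hd, key]
  have : TensorProduct.dualDistrib k (Module.Dual k L) (Module.Dual k L) s =
      (TensorProduct.dualDistribEquiv k (Module.Dual k L) (Module.Dual k L)) s := rfl
  rw [this, hs, LinearEquiv.apply_symm_apply]
  simp [φ, Module.evalEquiv_toLinearMap]

lemma dpr_adT (ξ η : Module.Dual k L) (x : L) (t : L ⊗[k] L) :
    dpr k L ξ η (adT k L x t) =
      dpr k L (ξ ∘ₗ (LieAlgebra.ad k L x : L →ₗ[k] L)) η t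
        + dpr k L ξ (η ∘ₗ (LieAlgebra.ad k L x : L →ₗ[k] L)) t := by
  induction t using TensorProduct.induction_on with
  | zero => simp
  | tmul a b =>
      simp only [adT, lieBr, LinearMap.add_apply, LinearMap.coe_comp, Function.comp_apply,
        LinearMap.coe_rTensorHom, LinearMap.coe_lTensorHom, LinearMap.rTensor_tmul,
        LinearMap.lTensor_tmul, map_add, dpr_tmul, LieAlgebra.ad_apply, LieHom.coe_toLinearMap]
  | add a b ha hb =>
      simp only [map_add, ha, hb]
      ring

end Aux2
section Aux3
set_option linter.unusedSectionVars false
set_option maxHeartbeats 1000000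
open Module LinearMap TensorProduct
variable (k : Type*) [Field k] [CharZero k]
variable (L : Type*) [LieRing L] [LieAlgebra k L] [FiniteDimensional k L]
variable (β : Module.Dual k L →ₗ[k] Module.Dual k L →ₗ[k] Module.Dual k L)

/-- The scalar form of the cocycle identity. -/
def StarId : Prop :=
  ∀ (x y : L) (ξ η : Module.Dual k L),
    β ξ η ⁅x, y⁆ =
      β (ξ ∘ₗ LieAlgebra.ad k L x) η y + β ξ (η ∘ₗ LieAlgebra.ad k L x) y
        - β (ξ ∘ₗ LieAlgebra.ad k L y) η x - β ξ (η ∘ₗ LieAlgebra.ad k L y) x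

lemma cocycle_iff_star :
    IsCocycle k L (dualCobracket k L β) ↔ StarId k L β := by
  constructor
  · intro h x y ξ η
    have := congrArg (dpr k L ξ η) (h x y)
    simp only [map_sub, dpr_dualCobracket, dpr_adT] at this
    linear_combination this
  · intro h x y
    rw [← sub_eq_zero]
    apply eq_zero_of_dpr
    intro ξ η
    simp only [map_sub, dpr_dualCobracket, dpr_adT]
    linear_combination h x y ξ η

lemma coadD_lie (ξ θ : Module.Dual k L) (x y : L) :
    θ ⁅x, coadD k L β ξ y⁆ = -β ξ (θ ∘ₗ LieAlgebra.ad k L x) y := by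
  have := coadD_apply k L β ξ (θ ∘ₗ LieAlgebra.ad k L x) y
  simpa using this

lemma coadA_coadD_apply (ξ η : Module.Dual k L) (x y : L) :
    coadA k L (coadD k L β ξ x) η y = -β ξ (η ∘ₗ LieAlgebra.ad k L y) x := by
  rw [coadA_apply, ← lie_skew, map_neg, neg_neg]
  exact coadD_apply k L β ξ (η ∘ₗ LieAlgebra.ad k L y) x

end Aux3
section Aux4
set_option linter.unusedSectionVars false
set_option maxHeartbeats 1000000
open Module LinearMap TensorProduct
variable (k : Type*) [Field k] [CharZero k]
variable (L : Type*) [LieRing L] [LieAlgebra k L] [FiniteDimensional k L]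
variable (β : Module.Dual k L →ₗ[k] Module.Dual k L →ₗ[k] Module.Dual k L)

lemma coadD_zero_left (x : L) : coadD k L β 0 x = 0 := by simp [coadD]
lemma coadD_zero_right (ξ : Module.Dual k L) : coadD k L β ξ 0 = 0 := by simp [coadD]
lemma coadA_zero_left (η : Module.Dual k L) : coadA k L (0 : L) η = 0 := by
  ext w; simp [coadA_apply]
lemma coadA_zero_right (x : L) : coadA k L x (0 : Module.Dual k L) = 0 := by
  ext w; simp [coadA_apply]

lemma coadD_add_left (ξ ξ' : Module.Dual k L) (x : L) :
    coadD k L β (ξ + ξ') x = coadD k L β ξ x + coadD k L β ξ' x := by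
  rw [← sub_eq_zero, ← Module.forall_dual_apply_eq_zero_iff k]
  intro θ
  simp [coadD_apply, map_add, map_sub]
  ring

lemma coadD_add_right (ξ : Module.Dual k L) (x x' : L) :
    coadD k L β ξ (x + x') = coadD k L β ξ x + coadD k L β ξ x' := by
  rw [← sub_eq_zero, ← Module.forall_dual_apply_eq_zero_iff k]
  intro θ
  simp [coadD_apply, map_add, map_sub]
  ring

lemma coadA_add_left (x x' : L) (η : Module.Dual k L) :
    coadA k L (x + x') η = coadA k L x η + coadA k L x' η := by
  ext w; simp [coadA_apply, add_lie]; ring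

lemma coadA_add_right (x : L) (η η' : Module.Dual k L) :
    coadA k L x (η + η') = coadA k L x η + coadA k L x η' := by
  ext w; simp [coadA_apply]; ring

lemma db_add_left (p p' q : L × Module.Dual k L) :
    doubleBracket k L β (p + p') q = doubleBracket k L β p q + doubleBracket k L β p' q := by
  simp only [doubleBracket, Prod.fst_add, Prod.snd_add, coadD_add_left, coadD_add_right,
    coadA_add_left, coadA_add_right, add_lie, map_add, LinearMap.add_apply, Prod.mk_add_mk,
    Prod.mk.injEq]
  constructor <;> abel

lemma db_add_right (p q q' : L × Module.Dual k L) :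
    doubleBracket k L β p (q + q') = doubleBracket k L β p q + doubleBracket k L β p q' := by
  simp only [doubleBracket, Prod.fst_add, Prod.snd_add, coadD_add_left, coadD_add_right,
    coadA_add_left, coadA_add_right, lie_add, map_add, LinearMap.add_apply, Prod.mk_add_mk,
    Prod.mk.injEq]
  constructor <;> abel

lemma db_a_left (x : L) (q : L × Module.Dual k L) :
    doubleBracket k L β (x, 0) q = (⁅x, q.1⁆ - coadD k L β q.2 x, coadA k L x q.2) := by
  simp [doubleBracket, coadD_zero_left, coadA_zero_right]

lemma db_d_left (ξ : Module.Dual k L) (q : L × Module.Dual k L) :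
    doubleBracket k L β (0, ξ) q = (coadD k L β ξ q.1, β ξ q.2 - coadA k L q.1 ξ) := by
  simp [doubleBracket, coadD_zero_right, coadA_zero_left]

lemma db_aa (x y : L) : doubleBracket k L β (x, 0) (y, 0) = (⁅x, y⁆, 0) := by
  simp [db_a_left, coadD_zero_left, coadA_zero_right]

lemma db_dd (ξ η : Module.Dual k L) :
    doubleBracket k L β (0, ξ) (0, η) = (0, β ξ η) := by
  simp [db_d_left, coadD_zero_right, coadA_zero_left]

lemma db_ad (x : L) (η : Module.Dual k L) :
    doubleBracket k L β (x, 0) (0, η) = (-coadD k L β η x, coadA k L x η) := by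
  simp [db_a_left]

lemma db_da (ξ : Module.Dual k L) (y : L) :
    doubleBracket k L β (0, ξ) (y, 0) = (coadD k L β ξ y, -coadA k L y ξ) := by
  simp [db_d_left, coadA_zero_right]

lemma lie_coadD (ξ θ : Module.Dual k L) (x w : L) :
    θ ⁅coadD k L β ξ x, w⁆ = β ξ (θ ∘ₗ LieAlgebra.ad k L w) x := by
  rw [← lie_skew, map_neg, coadD_lie, neg_neg]

lemma J_aaa (x y z : L) :
    doubleBracket k L β (x, 0) (doubleBracket k L β (y, 0) (z, 0)) +
      doubleBracket k L β (y, 0) (doubleBracket k L β (z, 0) (x, 0)) +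
      doubleBracket k L β (z, 0) (doubleBracket k L β (x, 0) (y, 0)) = 0 := by
  simp only [db_aa, Prod.mk_add_mk, add_zero, Prod.mk_eq_zero]
  exact ⟨lie_jacobi x y z, trivial⟩

lemma J_ddd (hβjac : ∀ ξ η ζ, β ξ (β η ζ) + β η (β ζ ξ) + β ζ (β ξ η) = 0)
    (ξ η ζ : Module.Dual k L) :
    doubleBracket k L β (0, ξ) (doubleBracket k L β (0, η) (0, ζ)) +
      doubleBracket k L β (0, η) (doubleBracket k L β (0, ζ) (0, ξ)) +
      doubleBracket k L β (0, ζ) (doubleBracket k L β (0, ξ) (0, η)) = 0 := by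
  simp only [db_dd, Prod.mk_add_mk, add_zero, Prod.mk_eq_zero]
  exact ⟨trivial, hβjac ξ η ζ⟩

end Aux4
section Aux5
set_option linter.unusedSectionVars false
set_option maxHeartbeats 1000000
open Module LinearMap TensorProduct
variable (k : Type*) [Field k] [CharZero k]
variable (L : Type*) [LieRing L] [LieAlgebra k L] [FiniteDimensional k L]
variable (β : Module.Dual k L →ₗ[k] Module.Dual k L →ₗ[k] Module.Dual k L)

lemma J_aad (hst : StarId k L β) (x y : L) (ζ : Module.Dual k L) :
    doubleBracket k L β (x, 0) (doubleBracket k L β (y, 0) (0, ζ)) +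
      doubleBracket k L β (y, 0) (doubleBracket k L β (0, ζ) (x, 0)) +
      doubleBracket k L β (0, ζ) (doubleBracket k L β (x, 0) (y, 0)) = 0 := by
  rw [db_ad, db_da, db_aa, db_a_left, db_a_left, db_d_left]
  simp only [Prod.mk_add_mk, Prod.mk_eq_zero, map_zero]
  constructor
  · rw [← Module.forall_dual_apply_eq_zero_iff k]
    intro θ
    simp only [map_add, map_sub, map_neg, lie_neg, coadD_lie, coadD_apply, coadA_eq,
      LinearMap.neg_apply, map_neg, neg_neg]
    linear_combination (-1 : k) * hst x y ζ θ
  · ext w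
    simp only [LinearMap.add_apply, LinearMap.sub_apply, LinearMap.zero_apply,
      coadA_apply, map_neg, LinearMap.neg_apply, lie_lie, map_sub, neg_neg, zero_sub,
      zero_add, sub_zero]
    ring

lemma J_add (hst : StarId k L β)
    (hsk : ∀ a b : Module.Dual k L, β a b = -β b a)
    (hβjac : ∀ ξ η ζ, β ξ (β η ζ) + β η (β ζ ξ) + β ζ (β ξ η) = 0)
    (x : L) (η ζ : Module.Dual k L) :
    doubleBracket k L β (x, 0) (doubleBracket k L β (0, η) (0, ζ)) +
      doubleBracket k L β (0, η) (doubleBracket k L β (0, ζ) (x, 0)) +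
      doubleBracket k L β (0, ζ) (doubleBracket k L β (x, 0) (0, η)) = 0 := by
  rw [db_dd, db_da, db_ad, db_ad, db_d_left, db_d_left]
  simp only [Prod.mk_add_mk, Prod.mk_eq_zero]
  constructor
  · rw [← Module.forall_dual_apply_eq_zero_iff k]
    intro θ
    simp only [map_add, map_sub, map_neg, coadD_apply, LinearMap.neg_apply, neg_neg]
    have j : β ζ (β η θ) x + β η (β θ ζ) x + β θ (β ζ η) x = 0 := by
      have := LinearMap.congr_fun (hβjac ζ η θ) x
      simpa using this
    have s1 : β (β η ζ) θ x = -β θ (β η ζ) x := by rw [hsk (β η ζ) θ]; simp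
    have s2 : β θ (β η ζ) x = -β θ (β ζ η) x := by rw [hsk η ζ]; simp
    have s3 : β η (β ζ θ) x = -β η (β θ ζ) x := by rw [hsk ζ θ]; simp
    linear_combination j + s1 - s2 - s3
  · ext w
    simp only [LinearMap.add_apply, LinearMap.sub_apply, coadA_apply, map_neg,
      LinearMap.neg_apply, neg_neg, coadA_coadD_apply, neg_lie, coadA_eq,
      LinearMap.coe_comp, Function.comp_apply, LieAlgebra.ad_apply, LinearMap.zero_apply,
      lie_coadD]
    have s4 : β (η ∘ₗ LieAlgebra.ad k L x) ζ w = -β ζ (η ∘ₗ LieAlgebra.ad k L x) w := by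
      rw [hsk]; simp
    have s5 : β (η ∘ₗ LieAlgebra.ad k L w) ζ x = -β ζ (η ∘ₗ LieAlgebra.ad k L w) x := by
      rw [hsk]; simp
    linear_combination (-1 : k) * hst x w η ζ - s4 + s5
end Aux5

theorem stmt5
    (β : Module.Dual k L →ₗ[k] Module.Dual k L →ₗ[k] Module.Dual k L)
    (hβskew : ∀ ξ, β ξ ξ = 0)
    (hβjac : ∀ ξ η ζ, β ξ (β η ζ) + β η (β ζ ξ) + β ζ (β ξ η) = 0) :
    (∀ p q s : L × Module.Dual k L,
        doubleBracket k L β p (doubleBracket k L β q s) +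
          doubleBracket k L β q (doubleBracket k L β s p) +
          doubleBracket k L β s (doubleBracket k L β p q) = 0) ↔
      IsCocycle k L (dualCobracket k L β) := by
  have hsk : ∀ a b : Module.Dual k L, β a b = -β b a := by
    intro a b
    have h := hβskew (a + b)
    simp only [map_add, LinearMap.add_apply, hβskew, zero_add, add_zero] at h
    exact eq_neg_of_add_eq_zero_right h
  constructor
  · intro hJ
    rw [cocycle_iff_star]
    intro x y ξ η
    have h := hJ (x, 0) (y, 0) (0, ξ)
    rw [db_ad, db_da, db_aa, db_a_left, db_a_left, db_d_left] at h
    simp only [Prod.mk_add_mk, Prod.mk_eq_zero, map_zero] at h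
    have h1 := h.1
    have h2 := congrArg (⇑η) h1
    simp only [map_add, map_sub, map_neg, lie_neg, coadD_lie, coadD_apply, coadA_eq,
      LinearMap.neg_apply, neg_neg, map_zero] at h2
    linear_combination (-1 : k) * h2
  · intro hc
    have hst := (cocycle_iff_star k L β).mp hc
    intro p q s
    obtain ⟨x, ξ⟩ := p
    obtain ⟨y, η⟩ := q
    obtain ⟨z, ζ⟩ := s
    have hx : ((x, ξ) : L × Module.Dual k L) = (x, 0) + (0, ξ) := by simp
    have hy : ((y, η) : L × Module.Dual k L) = (y, 0) + (0, η) := by simp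
    have hz : ((z, ζ) : L × Module.Dual k L) = (z, 0) + (0, ζ) := by simp
    rw [hx, hy, hz]
    simp only [db_add_left, db_add_right]
    have e : ∀ A B C D E F G H : L × Module.Dual k L, True := fun _ _ _ _ _ _ _ _ => trivial
    calc _ = (doubleBracket k L β (x, 0) (doubleBracket k L β (y, 0) (z, 0)) +
          doubleBracket k L β (y, 0) (doubleBracket k L β (z, 0) (x, 0)) +
          doubleBracket k L β (z, 0) (doubleBracket k L β (x, 0) (y, 0))) +
        (doubleBracket k L β (x, 0) (doubleBracket k L β (y, 0) (0, ζ)) +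
          doubleBracket k L β (y, 0) (doubleBracket k L β (0, ζ) (x, 0)) +
          doubleBracket k L β (0, ζ) (doubleBracket k L β (x, 0) (y, 0))) +
        (doubleBracket k L β (z, 0) (doubleBracket k L β (x, 0) (0, η)) +
          doubleBracket k L β (x, 0) (doubleBracket k L β (0, η) (z, 0)) +
          doubleBracket k L β (0, η) (doubleBracket k L β (z, 0) (x, 0))) +
        (doubleBracket k L β (y, 0) (doubleBracket k L β (z, 0) (0, ξ)) +
          doubleBracket k L β (z, 0) (doubleBracket k L β (0, ξ) (y, 0)) +
          doubleBracket k L β (0, ξ) (doubleBracket k L β (y, 0) (z, 0))) +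
        (doubleBracket k L β (x, 0) (doubleBracket k L β (0, η) (0, ζ)) +
          doubleBracket k L β (0, η) (doubleBracket k L β (0, ζ) (x, 0)) +
          doubleBracket k L β (0, ζ) (doubleBracket k L β (x, 0) (0, η))) +
        (doubleBracket k L β (y, 0) (doubleBracket k L β (0, ζ) (0, ξ)) +
          doubleBracket k L β (0, ζ) (doubleBracket k L β (0, ξ) (y, 0)) +
          doubleBracket k L β (0, ξ) (doubleBracket k L β (y, 0) (0, ζ))) +
        (doubleBracket k L β (z, 0) (doubleBracket k L β (0, ξ) (0, η)) +
          doubleBracket k L β (0, ξ) (doubleBracket k L β (0, η) (z, 0)) +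
          doubleBracket k L β (0, η) (doubleBracket k L β (z, 0) (0, ξ))) +
        (doubleBracket k L β (0, ξ) (doubleBracket k L β (0, η) (0, ζ)) +
          doubleBracket k L β (0, η) (doubleBracket k L β (0, ζ) (0, ξ)) +
          doubleBracket k L β (0, ζ) (doubleBracket k L β (0, ξ) (0, η))) := by abel
      _ = 0 := by
          rw [J_aaa k L β x y z, J_aad k L β hst x y ζ, J_aad k L β hst z x η,
            J_aad k L β hst y z ξ, J_add k L β hst hsk hβjac x η ζ,
            J_add k L β hst hsk hβjac y ζ ξ, J_add k L β hst hsk hβjac z ξ η,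
            J_ddd k L β hβjac ξ η ζ]
          simp
end
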